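/- arXiv:math/0602005 — 3 statements merged into one kernel-verified Lean document; each statement's English description precedes it below -/
import Mathlib

section
/- Let the strongly monotone, forward complete system ẋ = f(x) on X be translation invariant along the unit vector v ∈ interior(K), with X closed and invariant under translations by v, and let ξ ∈ X be such that the solution φ_t(ξ) is bounded modulo v. Then for every τ > 0, the distance from φ_{t+τ}(ξ) − φ_t(ξ) to the line span{v} tends to 0 as t → ∞; that is, inf_{λ ∈ ℝ} |φ_{t+τ}(ξ) − φ_t(ξ) − λv| → 0 as t → ∞. -/
open Filter Topology Set

/-- The orthogonal projection `π_v(x) = x - (vᵀx) v` onto `v^⊥`. -/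
noncomputable def piProj {n : ℕ} (v x : EuclideanSpace ℝ (Fin n)) :
    EuclideanSpace ℝ (Fin n) :=
  x - (inner ℝ v x : ℝ) • v

lemma flow_master {n : ℕ} {X : Set (EuclideanSpace ℝ (Fin n))}
    {f : EuclideanSpace ℝ (Fin n) → EuclideanSpace ℝ (Fin n)}
    (hf : ∀ x ∈ X, ∃ L : NNReal, ∃ U ∈ nhdsWithin x X, LipschitzOnWith L f U)
    {T : ℝ} (hT : 0 ≤ T) (y : ℝ → EuclideanSpace ℝ (Fin n))
    (hyc : ContinuousOn y (Icc 0 T)) (hyX : ∀ s ∈ Icc 0 T, y s ∈ X)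
    (hy' : ∀ s ∈ Ico 0 T, HasDerivWithinAt y (f (y s)) (Ici s) s)
    {ε : ℝ} (hε : 0 < ε) :
    ∃ δ > 0, ∀ z : ℝ → EuclideanSpace ℝ (Fin n), ContinuousOn z (Icc 0 T) →
      (∀ s ∈ Icc 0 T, z s ∈ X) → (∀ s ∈ Ico 0 T, HasDerivWithinAt z (f (z s)) (Ici s) s) →
      dist (z 0) (y 0) ≤ δ → ∀ s ∈ Icc 0 T, dist (z s) (y s) ≤ ε := by
  have h0T : (0:ℝ) ∈ Icc 0 T := ⟨le_rfl, hT⟩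
  set C : Set (EuclideanSpace ℝ (Fin n)) := y '' Icc 0 T with hC
  have hCcomp : IsCompact C := isCompact_Icc.image_of_continuousOn hyc
  have hCX : ∀ x ∈ C, x ∈ X := by rintro x ⟨s, hs, rfl⟩; exact hyX s hs
  have hloc : ∀ x : C, ∃ r : ℝ, 0 < r ∧ ∃ L : NNReal,
      ∀ p ∈ X ∩ Metric.ball (x:EuclideanSpace ℝ (Fin n)) r,
      ∀ q ∈ X ∩ Metric.ball (x:EuclideanSpace ℝ (Fin n)) r,
      dist (f p) (f q) ≤ L * dist p q := by
    rintro ⟨x, hx⟩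
    obtain ⟨L, U, hU, hLip⟩ := hf x (hCX x hx)
    rw [mem_nhdsWithin] at hU
    obtain ⟨O, hO, hxO, hOU⟩ := hU
    obtain ⟨r, hr, hball⟩ := Metric.isOpen_iff.1 hO x hxO
    refine ⟨r, hr, L, ?_⟩
    intro p hp q hq
    exact hLip.dist_le_mul p (hOU ⟨hball hp.2, hp.1⟩) q (hOU ⟨hball hq.2, hq.1⟩)
  choose r hr L hL using hloc
  have hcover : C ⊆ ⋃ x : C, Metric.ball (x : EuclideanSpace ℝ (Fin n)) (r x / 2) := by
    intro x hx
    exact mem_iUnion.2 ⟨⟨x, hx⟩, by simpa using half_pos (hr ⟨x, hx⟩)⟩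
  obtain ⟨s, hs⟩ := hCcomp.elim_finite_subcover _ (fun i => Metric.isOpen_ball) hcover
  have hy0C : y 0 ∈ C := ⟨0, h0T, rfl⟩
  have hsne : s.Nonempty := by
    obtain ⟨i, hi, -⟩ := mem_iUnion₂.1 (hs hy0C)
    exact ⟨i, hi⟩
  set δ₀ : ℝ := s.inf' hsne (fun i => r i / 2) with hδ₀def
  have hδ₀ : 0 < δ₀ := by
    rw [hδ₀def, Finset.lt_inf'_iff]
    exact fun i _ => half_pos (hr i)
  set L0 : ℝ := max (s.sup' hsne fun i => ((L i : ℝ))) 0 with hL0def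
  have hL0 : 0 ≤ L0 := le_max_right _ _
  have key : ∀ p ∈ C, ∀ q ∈ X, dist q p < δ₀ → dist (f q) (f p) ≤ L0 * dist q p := by
    intro p hp q hq hd
    obtain ⟨i, hi, hpball⟩ := mem_iUnion₂.1 (hs hp)
    have hδr : δ₀ ≤ r i / 2 := Finset.inf'_le _ hi
    rw [Metric.mem_ball] at hpball
    have hq' : q ∈ Metric.ball (i : EuclideanSpace ℝ (Fin n)) (r i) := by
      rw [Metric.mem_ball]
      calc dist q i ≤ dist q p + dist p i := dist_triangle _ _ _
        _ < δ₀ + r i / 2 := by linarith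
        _ ≤ r i := by linarith
    have hp' : p ∈ Metric.ball (i : EuclideanSpace ℝ (Fin n)) (r i) :=
      Metric.mem_ball.2 (hpball.trans (half_lt_self (hr i)))
    calc dist (f q) (f p) ≤ L i * dist q p := hL i q ⟨hq, hq'⟩ p ⟨hCX p hp, hp'⟩
      _ ≤ L0 * dist q p := by
          refine mul_le_mul_of_nonneg_right ?_ dist_nonneg
          exact le_trans (Finset.le_sup' (fun i => ((L i : ℝ))) hi) (le_max_left _ _)
  set ε' : ℝ := min (δ₀ / 2) ε / 2 with hε'def
  have hε' : 0 < ε' := by positivity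
  have hε'lt : ε' < δ₀ / 2 := by
    have h1 : min (δ₀/2) ε ≤ δ₀/2 := min_le_left _ _
    rw [hε'def]; linarith
  have hε'le : ε' ≤ ε := by
    have h1 : min (δ₀/2) ε ≤ ε := min_le_right _ _
    rw [hε'def]; linarith
  refine ⟨ε' * Real.exp (-(L0 * T)), by positivity, ?_⟩
  have hδle : ε' * Real.exp (-(L0 * T)) ≤ ε' := by
    have h1 : Real.exp (-(L0 * T)) ≤ 1 := by
      rw [Real.exp_le_one_iff]
      nlinarith
    nlinarith [Real.exp_pos (-(L0 * T))]
  intro z hzc hzX hz' hz0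
  set ψ : ℝ → EuclideanSpace ℝ (Fin n) := fun u => z u - y u with hψdef
  have hψc : ContinuousOn ψ (Icc 0 T) := hzc.sub hyc
  have hψ' : ∀ u ∈ Ico 0 T, HasDerivWithinAt ψ (f (z u) - f (y u)) (Ici u) u :=
    fun u hu => (hz' u hu).sub (hy' u hu)
  have hψ0 : ‖ψ 0‖ ≤ ε' * Real.exp (-(L0 * T)) := by
    rw [hψdef]; rw [← dist_eq_norm]; exact hz0
  have hψnorm : ∀ u ∈ Icc 0 T, ‖ψ u‖ = dist (z u) (y u) := fun u _ => (dist_eq_norm _ _).symm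
  set B : Set ℝ := {m | m ∈ Icc 0 T ∧ ∀ u ∈ Icc 0 m, ‖ψ u‖ ≤ δ₀ / 2} with hBdef
  have h0B : (0:ℝ) ∈ B := by
    refine ⟨h0T, fun u hu => ?_⟩
    have hu0 : u = 0 := le_antisymm hu.2 hu.1
    rw [hu0]
    calc ‖ψ 0‖ ≤ ε' * Real.exp (-(L0 * T)) := hψ0
      _ ≤ ε' := hδle
      _ ≤ δ₀ / 2 := hε'lt.le
  have hBbdd : BddAbove B := ⟨T, fun m hm => hm.1.2⟩
  set m : ℝ := sSup B with hmdef
  have hm0 : 0 ≤ m := le_csSup hBbdd h0B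
  have hmT : m ≤ T := csSup_le ⟨0, h0B⟩ (fun x hx => hx.1.2)
  have hmIcc : m ∈ Icc 0 T := ⟨hm0, hmT⟩
  have hub : ∀ u, 0 ≤ u → u < m → ‖ψ u‖ ≤ δ₀ / 2 := by
    intro u hu hum
    obtain ⟨m', hm'B, hm'⟩ := exists_lt_of_lt_csSup ⟨0, h0B⟩ hum
    exact hm'B.2 u ⟨hu, hm'.le⟩
  have hψm : ‖ψ m‖ ≤ δ₀ / 2 := by
    rcases eq_or_lt_of_le hm0 with h | h
    · rw [← h]
      exact h0B.2 0 ⟨le_rfl, le_rfl⟩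
    · have hclos : m ∈ closure (Ico 0 m) := by
        rw [closure_Ico (ne_of_lt h)]
        exact ⟨hm0, le_rfl⟩
      have hne : (𝓝[Ico 0 m] m).NeBot := mem_closure_iff_nhdsWithin_neBot.1 hclos
      have hsub : Ico 0 m ⊆ Icc 0 T := fun u hu => ⟨hu.1, hu.2.le.trans hmT⟩
      have hcont : ContinuousWithinAt (fun u => ‖ψ u‖) (Ico 0 m) m :=
        ((hψc.norm m hmIcc).mono hsub).mono_of_mem_nhdsWithin ?_
      · exact le_of_tendsto hcont (eventually_nhdsWithin_of_forall (fun u hu => hub u hu.1 hu.2))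
      · exact self_mem_nhdsWithin
  have hmB : m ∈ B := by
    refine ⟨hmIcc, fun u hu => ?_⟩
    rcases lt_or_eq_of_le hu.2 with h | h
    · exact hub u hu.1 h
    · rw [h]; exact hψm
  -- Gronwall on [0, m]
  have hgron : ∀ u ∈ Icc 0 m, ‖ψ u‖ ≤ ε' * Real.exp (-(L0*T)) * Real.exp (L0 * u) := by
    have hIccsub : Icc 0 m ⊆ Icc 0 T := Icc_subset_Icc le_rfl hmT
    have hIcosub : Ico 0 m ⊆ Ico 0 T := Ico_subset_Ico le_rfl hmT
    have hbd : ∀ u ∈ Ico 0 m, ‖f (z u) - f (y u)‖ ≤ L0 * ‖ψ u‖ + 0 := by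
      intro u hu
      have huT : u ∈ Icc 0 T := hIccsub ⟨hu.1, hu.2.le⟩
      have hyuC : y u ∈ C := ⟨u, huT, rfl⟩
      have hdist : dist (z u) (y u) < δ₀ := by
        rw [← hψnorm u huT]
        exact lt_of_le_of_lt (hmB.2 u ⟨hu.1, hu.2.le⟩) (by linarith)
      have := key (y u) hyuC (z u) (hzX u huT) hdist
      rw [dist_eq_norm, dist_eq_norm] at this
      rw [add_zero]
      exact this
    have := norm_le_gronwallBound_of_norm_deriv_right_le
      (hψc.mono hIccsub) (fun u hu => hψ' u (hIcosub hu)) hψ0 hbd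
    intro u hu
    have h2 := this u hu
    rwa [gronwallBound_ε0, sub_zero] at h2
  have hfinal : ∀ u ∈ Icc 0 m, ‖ψ u‖ ≤ ε' := by
    intro u hu
    calc ‖ψ u‖ ≤ ε' * Real.exp (-(L0*T)) * Real.exp (L0 * u) := hgron u hu
      _ ≤ ε' * Real.exp (-(L0*T)) * Real.exp (L0 * T) := by
          refine mul_le_mul_of_nonneg_left (Real.exp_le_exp.2 ?_) (by positivity)
          have : u ≤ T := hu.2.trans hmT
          nlinarith
      _ = ε' := by
          rw [mul_assoc, ← Real.exp_add]
          simp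
  -- m = T
  have hmeqT : m = T := by
    by_contra hne2
    have hlt : m < T := lt_of_le_of_ne hmT hne2
    have hcontm : ContinuousWithinAt (fun u => ‖ψ u‖) (Icc 0 T) m := hψc.norm m hmIcc
    have hψmlt : ‖ψ m‖ < δ₀ / 2 := lt_of_le_of_lt (hfinal m ⟨hm0, le_rfl⟩) hε'lt
    have hev : ∀ᶠ u in 𝓝[Icc 0 T] m, ‖ψ u‖ < δ₀ / 2 := hcontm.eventually_lt_const hψmlt
    obtain ⟨ι, hι, hsubball⟩ := Metric.mem_nhdsWithin_iff.1 hev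
    set m' : ℝ := min T (m + ι / 2) with hm'def
    have hmm' : m < m' := lt_min hlt (by linarith)
    have hm'B : m' ∈ B := by
      refine ⟨⟨hm0.trans hmm'.le, min_le_left _ _⟩, fun u hu => ?_⟩
      rcases le_or_gt u m with h | h
      · exact (hfinal u ⟨hu.1, h⟩).trans hε'lt.le
      · have huball : u ∈ Metric.ball m ι := by
          rw [Metric.mem_ball, Real.dist_eq, abs_of_pos (by linarith)]
          have : u ≤ m + ι / 2 := hu.2.trans (min_le_right _ _)
          linarith
        have huIcc : u ∈ Icc 0 T := ⟨hu.1, hu.2.trans (min_le_left _ _)⟩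
        exact (hsubball ⟨huball, huIcc⟩).le
    have := le_csSup hBbdd hm'B
    rw [← hmdef] at this
    linarith
  intro u hu
  rw [← hψnorm u hu]
  rw [← hmeqT] at hu
  exact (hfinal u hu).trans hε'le


set_option maxHeartbeats 2000000 in
/-- for a strongly monotone, forward complete system `ẋ = f(x)` on `X`,
translation invariant along the unit vector `v ∈ interior K`, with `X` closed and
invariant under translations by `v`, and a solution `φ_t(ξ)` bounded modulo `v`, for
every `τ > 0` the distance from `φ_{t+τ}(ξ) - φ_t(ξ)` to `span{v}` tends to `0` as
`t → ∞`. -/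
theorem stmt13 {n : ℕ} (K X : Set (EuclideanSpace ℝ (Fin n)))
    (f : EuclideanSpace ℝ (Fin n) → EuclideanSpace ℝ (Fin n))
    (φ : ℝ → EuclideanSpace ℝ (Fin n) → EuclideanSpace ℝ (Fin n))
    (v : EuclideanSpace ℝ (Fin n))
    -- K is a closed pointed convex cone with nonempty interior
    (hKclosed : IsClosed K) (hKconv : Convex ℝ K)
    (hKcone : ∀ c : ℝ, 0 ≤ c → ∀ x ∈ K, c • x ∈ K)
    (hKpointed : ∀ x ∈ K, -x ∈ K → x = 0)
    (hv : v ∈ interior K) (hvnorm : ‖v‖ = 1)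
    -- X is closed, the closure of its interior, and invariant under translations by v
    (hXclosed : IsClosed X) (hXreg : X = closure (interior X))
    (hXtrans : ∀ x ∈ X, ∀ lam : ℝ, x + lam • v ∈ X)
    -- f is locally Lipschitz on X
    (hf : ∀ x ∈ X, ∃ L : NNReal, ∃ U ∈ nhdsWithin x X, LipschitzOnWith L f U)
    -- φ is the forward complete flow of ẋ = f(x) on X
    (hφ0 : ∀ ξ ∈ X, φ 0 ξ = ξ)
    (hφX : ∀ ξ ∈ X, ∀ t : ℝ, 0 ≤ t → φ t ξ ∈ X)
    (hφode : ∀ ξ ∈ X, ∀ t : ℝ, 0 ≤ t →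
      HasDerivWithinAt (fun s => φ s ξ) (f (φ t ξ)) (Set.Ici 0) t)
    -- strong monotonicity: ξ₁ ≻ ξ₂ ⟹ φ_t(ξ₁) ≫ φ_t(ξ₂) for t > 0
    (hmono : ∀ ξ₁ ∈ X, ∀ ξ₂ ∈ X, ∀ t : ℝ, 0 < t →
      ξ₁ - ξ₂ ∈ K → ξ₁ ≠ ξ₂ → φ t ξ₁ - φ t ξ₂ ∈ interior K)
    -- translation invariance along v
    (htrans : ∀ ξ ∈ X, ∀ lam t : ℝ, 0 ≤ t → φ t (ξ + lam • v) = φ t ξ + lam • v)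
    -- the solution through ξ is bounded modulo v
    (ξ : EuclideanSpace ℝ (Fin n)) (hξ : ξ ∈ X)
    (hbd : ∃ M : ℝ, ∀ t : ℝ, 0 ≤ t → ‖piProj v (φ t ξ)‖ ≤ M) :
    ∀ τ : ℝ, 0 < τ →
      Tendsto (fun t : ℝ => Metric.infDist (φ (t + τ) ξ - φ t ξ)
          (Submodule.span ℝ {v} : Set (EuclideanSpace ℝ (Fin n))))
        atTop (𝓝 0) := by
  -- basic cone facts
  have hvK : v ∈ K := interior_subset hv
  have hvne : v ≠ 0 := by
    intro h; rw [h, norm_zero] at hvnorm; norm_num at hvnorm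
  have hK0 : (0 : EuclideanSpace ℝ (Fin n)) ∈ K := by
    simpa using hKcone 0 le_rfl v hvK
  have hKadd : ∀ x ∈ K, ∀ y ∈ K, x + y ∈ K := by
    intro x hx y hy
    have h := hKconv hx hy (le_of_lt one_half_pos) (le_of_lt one_half_pos) (by norm_num)
    have h2 := hKcone 2 (by norm_num) _ h
    have h3 : (2:ℝ) • ((1/2 : ℝ) • x + (1/2 : ℝ) • y) = x + y := by
      rw [smul_add, smul_smul, smul_smul]; norm_num
    rwa [h3] at h2
  have hIntSmul : ∀ c : ℝ, 0 < c → ∀ x ∈ interior K, c • x ∈ interior K := by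
    intro c hc x hx
    have ho : IsOpen ((c • ·) '' interior K) :=
      (isOpenMap_smul₀ (ne_of_gt hc)) _ isOpen_interior
    have hsub : (c • ·) '' interior K ⊆ K := by
      rintro _ ⟨p, hp, rfl⟩; exact hKcone c hc.le p (interior_subset hp)
    exact interior_maximal hsub ho ⟨x, hx, rfl⟩
  have hdom : ∀ z : EuclideanSpace ℝ (Fin n), ∃ lam : ℝ, 0 < lam ∧
      lam • v - z ∈ interior K := by
    intro z
    have h1 : Tendsto (fun lam : ℝ => lam⁻¹) atTop (𝓝 0) := tendsto_inv_atTop_zero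
    have h2 : Tendsto (fun lam : ℝ => lam⁻¹ • z) atTop (𝓝 (0 : EuclideanSpace ℝ (Fin n))) := by
      simpa using h1.smul_const z
    have hlim : Tendsto (fun lam : ℝ => v - lam⁻¹ • z) atTop (𝓝 v) := by
      simpa using (tendsto_const_nhds (x := v) (f := atTop)).sub h2
    have hev : ∀ᶠ lam in atTop, v - lam⁻¹ • z ∈ interior K :=
      hlim.eventually_mem (isOpen_interior.mem_nhds hv)
    obtain ⟨lam, hmem, hlam⟩ := (hev.and (eventually_ge_atTop 1)).exists
    have hlam0 : (0:ℝ) < lam := lt_of_lt_of_le one_pos hlam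
    refine ⟨lam, hlam0, ?_⟩
    have h3 := hIntSmul lam hlam0 _ hmem
    rwa [smul_sub, smul_smul, mul_inv_cancel₀ (ne_of_gt hlam0), one_smul] at h3
  have hvpos : ∀ rr : ℝ, rr • v ∈ K → 0 ≤ rr := by
    intro rr hrr
    by_contra hneg
    push_neg at hneg
    have h1 : (-rr)⁻¹ • (rr • v) ∈ K :=
      hKcone _ (inv_nonneg.2 (by linarith)) _ hrr
    have h2 : (-rr)⁻¹ • (rr • v) = -v := by
      rw [smul_smul]
      have : (-rr)⁻¹ * rr = -1 := by
        rw [inv_neg, neg_mul, inv_mul_cancel₀ (ne_of_lt hneg)]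
      rw [this, neg_one_smul]
    rw [h2] at h1
    exact hvne (hKpointed v hvK h1)
  -- bound on order interval
  have hbound0 : ∃ M₀ : ℝ, 0 < M₀ ∧ ∀ z ∈ K, v - z ∈ K → ‖z‖ ≤ M₀ := by
    by_contra hcon
    push_neg at hcon
    have hcon' : ∀ m : ℕ, ∃ z, z ∈ K ∧ v - z ∈ K ∧ (m : ℝ) + 1 < ‖z‖ := by
      intro m
      obtain ⟨z, hz1, hz2, hz3⟩ := hcon ((m:ℝ)+1) (by positivity)
      exact ⟨z, hz1, hz2, hz3⟩
    choose z hzK hzv hznorm using hcon'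
    have hzpos : ∀ m : ℕ, 0 < ‖z m‖ := fun m => lt_of_le_of_lt (by positivity) (hznorm m)
    set u : ℕ → EuclideanSpace ℝ (Fin n) := fun m => ‖z m‖⁻¹ • z m with hu
    have hus : ∀ m, u m ∈ Metric.sphere (0 : EuclideanSpace ℝ (Fin n)) 1 := by
      intro m
      rw [mem_sphere_zero_iff_norm, hu, norm_smul, Real.norm_eq_abs,
        abs_of_pos (inv_pos.2 (hzpos m)), inv_mul_cancel₀ (ne_of_gt (hzpos m))]
    obtain ⟨w, hw, σ, hσmono, hσlim⟩ :=
      (isCompact_sphere (0 : EuclideanSpace ℝ (Fin n)) 1).tendsto_subseq hus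
    have hwnorm : ‖w‖ = 1 := mem_sphere_zero_iff_norm.1 hw
    have hwK : w ∈ K := hKclosed.mem_of_tendsto hσlim
      (Eventually.of_forall fun j => hKcone _ (inv_nonneg.2 (norm_nonneg _)) _ (hzK _))
    have hinvlim : Tendsto (fun j => ‖z (σ j)‖⁻¹) atTop (𝓝 0) := by
      apply squeeze_zero (fun j => inv_nonneg.2 (norm_nonneg _)) (g := fun j : ℕ => ((j:ℝ)+1)⁻¹)
      · intro j
        have h1 : (j : ℝ) + 1 ≤ (σ j : ℝ) + 1 := by
          have h0 : j ≤ σ j := hσmono.le_apply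
          have h0' : (j : ℝ) ≤ (σ j : ℝ) := Nat.cast_le.2 h0
          linarith
        have h2 : (j : ℝ) + 1 ≤ ‖z (σ j)‖ := h1.trans (hznorm (σ j)).le
        exact inv_anti₀ (by positivity) h2
      · simpa [one_div] using tendsto_one_div_add_atTop_nhds_zero_nat (𝕜 := ℝ)
    have hneg : Tendsto (fun j => ‖z (σ j)‖⁻¹ • (v - z (σ j))) atTop (𝓝 (-w)) := by
      have h1 : (fun j => ‖z (σ j)‖⁻¹ • (v - z (σ j)))
          = fun j => ‖z (σ j)‖⁻¹ • v - (u ∘ σ) j := by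
        funext j; rw [smul_sub]; rfl
      rw [h1]
      have h2 : Tendsto (fun j => ‖z (σ j)‖⁻¹ • v) atTop (𝓝 (0:EuclideanSpace ℝ (Fin n))) := by
        simpa using hinvlim.smul_const v
      simpa using h2.sub hσlim
    have hwK' : -w ∈ K := hKclosed.mem_of_tendsto hneg
      (Eventually.of_forall fun j => hKcone _ (inv_nonneg.2 (norm_nonneg _)) _ (hzv _))
    have := hKpointed w hwK hwK'
    rw [this, norm_zero] at hwnorm; norm_num at hwnorm
  obtain ⟨M₀, hM₀pos, hM₀⟩ := hbound0
  have hbound : ∀ c : ℝ, 0 ≤ c → ∀ z ∈ K, c • v - z ∈ K → ‖z‖ ≤ M₀ * c := by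
    intro c hc z hzK hczK
    rcases eq_or_lt_of_le hc with h | h
    · have h1 : -z ∈ K := by
        have : (0:ℝ) • v - z = -z := by rw [zero_smul, zero_sub]
        rw [← h, this] at hczK
        exact hczK
      have h2 := hKpointed z hzK h1
      rw [h2, norm_zero, ← h, mul_zero]
    · have h1 : c⁻¹ • z ∈ K := hKcone _ (inv_nonneg.2 hc) _ hzK
      have h2 : v - c⁻¹ • z ∈ K := by
        have h3 := hKcone c⁻¹ (inv_nonneg.2 hc) _ hczK
        rwa [smul_sub, smul_smul, inv_mul_cancel₀ (ne_of_gt h), one_smul] at h3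
      have h3 := hM₀ _ h1 h2
      rw [norm_smul, Real.norm_eq_abs, abs_of_pos (inv_pos.2 h)] at h3
      have h4 := mul_le_mul_of_nonneg_left h3 hc
      rwa [← mul_assoc, mul_inv_cancel₀ (ne_of_gt h), one_mul, mul_comm c M₀] at h4
  -- flow infrastructure
  have hcont : ∀ ζ ∈ X, ContinuousOn (fun t => φ t ζ) (Ici 0) := fun ζ hζ t ht =>
    (hφode ζ hζ t ht).continuousWithinAt
  have hshift : ∀ ζ ∈ X, ∀ t : ℝ, 0 ≤ t → ∀ s : ℝ, 0 ≤ s →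
      HasDerivWithinAt (fun u => φ (t + u) ζ) (f (φ (t + s) ζ)) (Ici s) s := by
    intro ζ hζ t ht s hs
    have h1 : HasDerivWithinAt (fun u => φ u ζ) (f (φ (t+s) ζ)) (Ici (t+s)) (t+s) :=
      (hφode ζ hζ (t+s) (by linarith)).mono (Ici_subset_Ici.2 (by linarith))
    have h2 : HasDerivWithinAt (fun u : ℝ => t + u) 1 (Ici s) s :=
      ((hasDerivAt_id s).const_add t).hasDerivWithinAt
    have h3 : MapsTo (fun u : ℝ => t + u) (Ici s) (Ici (t+s)) :=
      fun u hu => add_le_add_right hu t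
    have h4 := h1.scomp s h2 h3
    simpa [Function.comp_def] using h4
  have hcontshift : ∀ ζ ∈ X, ∀ t : ℝ, 0 ≤ t → ∀ T : ℝ,
      ContinuousOn (fun u => φ (t + u) ζ) (Icc 0 T) := by
    intro ζ hζ t ht T
    apply (hcont ζ hζ).comp (Continuous.continuousOn (continuous_const.add continuous_id))
    intro u hu
    exact add_nonneg ht hu.1
  have hsemi : ∀ ζ ∈ X, ∀ t : ℝ, 0 ≤ t → ∀ s : ℝ, 0 ≤ s → φ (t + s) ζ = φ s (φ t ζ) := by
    intro ζ hζ t ht s hs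
    have hζt : φ t ζ ∈ X := hφX ζ hζ t ht
    have key : ∀ ε : ℝ, 0 < ε → dist (φ (t+s) ζ) (φ s (φ t ζ)) ≤ ε := by
      intro ε hε
      obtain ⟨δ, hδ, hδ'⟩ := flow_master hf hs (fun u => φ u (φ t ζ))
        ((hcont _ hζt).mono (Icc_subset_Ici_self))
        (fun u hu => hφX _ hζt u hu.1)
        (fun u hu => (hφode _ hζt u hu.1).mono (Ici_subset_Ici.2 hu.1)) hε
      have hc : ContinuousOn (fun u => φ (t + u) ζ) (Icc 0 s) := hcontshift ζ hζ t ht s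
      have hX' : ∀ u ∈ Icc (0:ℝ) s, φ (t + u) ζ ∈ X := fun u hu =>
        hφX ζ hζ (t+u) (by have := hu.1; linarith)
      have hd' : ∀ u ∈ Ico (0:ℝ) s, HasDerivWithinAt (fun u => φ (t + u) ζ)
          (f (φ (t + u) ζ)) (Ici u) u := fun u hu => hshift ζ hζ t ht u hu.1
      have hd0 : dist (φ (t + 0) ζ) (φ 0 (φ t ζ)) ≤ δ := by
        rw [add_zero, hφ0 _ hζt, dist_self]
        exact hδ.le
      have := hδ' (fun u => φ (t + u) ζ) hc hX' hd' hd0 s ⟨hs, le_rfl⟩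
      exact this
    have hd0 : dist (φ (t+s) ζ) (φ s (φ t ζ)) ≤ 0 := by
      by_contra hcon
      push_neg at hcon
      have := key (dist (φ (t+s) ζ) (φ s (φ t ζ)) / 2) (by linarith)
      linarith
    exact dist_le_zero.1 hd0
  have hcontdep : ∀ η ∈ X, ∀ T : ℝ, 0 ≤ T → ∀ ε : ℝ, 0 < ε → ∃ δ > 0, ∀ η' ∈ X,
      dist η' η ≤ δ → ∀ s ∈ Icc 0 T, dist (φ s η') (φ s η) ≤ ε := by
    intro η hη T hT ε hε
    obtain ⟨δ, hδ, hδ'⟩ := flow_master hf hT (fun u => φ u η)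
      ((hcont _ hη).mono (Icc_subset_Ici_self))
      (fun u hu => hφX _ hη u hu.1)
      (fun u hu => (hφode _ hη u hu.1).mono (Ici_subset_Ici.2 hu.1)) hε
    refine ⟨δ, hδ, fun η' hη' hdst s hs => ?_⟩
    refine hδ' (fun u => φ u η')
      ((hcont _ hη').mono (Icc_subset_Ici_self))
      (fun u hu => hφX _ hη' u hu.1)
      (fun u hu => (hφode _ hη' u hu.1).mono (Ici_subset_Ici.2 hu.1)) ?_ s hs
    show dist (φ 0 η') (φ 0 η) ≤ δ
    rw [hφ0 _ hη', hφ0 _ hη]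
    exact hdst
  -- ================= MAIN ARGUMENT =================
  intro τ hτ
  have hφXt : ∀ t : ℝ, 0 ≤ t → φ t ξ ∈ X := fun t ht => hφX ξ hξ t ht
  obtain ⟨d, hd⟩ : ∃ d : ℝ → EuclideanSpace ℝ (Fin n),
      ∀ t, d t = φ (t + τ) ξ - φ t ξ := ⟨_, fun _ => rfl⟩
  have hAne : ∀ t : ℝ, {lam : ℝ | lam • v - d t ∈ K}.Nonempty := by
    intro t
    obtain ⟨lam, _, h⟩ := hdom (d t)
    refine ⟨lam, ?_⟩
    show lam • v - d t ∈ K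
    exact interior_subset h
  have hBne : ∀ t : ℝ, {lam : ℝ | d t - lam • v ∈ K}.Nonempty := by
    intro t
    obtain ⟨lam, _, h⟩ := hdom (-(d t))
    refine ⟨-lam, ?_⟩
    have h2 := interior_subset h
    show d t - (-lam) • v ∈ K
    have heq : d t - (-lam) • v = lam • v - -(d t) := by rw [neg_smul]; abel
    rw [heq]; exact h2
  have hABle : ∀ t : ℝ, ∀ lam1 ∈ {lam : ℝ | d t - lam • v ∈ K},
      ∀ lam2 ∈ {lam : ℝ | lam • v - d t ∈ K}, lam1 ≤ lam2 := by
    intro t lam1 h1 lam2 h2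
    have hsum : (lam2 - lam1) • v ∈ K := by
      have h3 := hKadd _ h2 _ h1
      have heq : lam2 • v - d t + (d t - lam1 • v) = (lam2 - lam1) • v := by
        rw [sub_smul]; abel
      rwa [heq] at h3
    have := hvpos _ hsum
    linarith
  have hAbdd : ∀ t : ℝ, BddBelow {lam : ℝ | lam • v - d t ∈ K} := by
    intro t
    obtain ⟨lam1, h1⟩ := hBne t
    exact ⟨lam1, fun x hx => hABle t lam1 h1 x hx⟩
  have hBbddA : ∀ t : ℝ, BddAbove {lam : ℝ | d t - lam • v ∈ K} := by
    intro t
    obtain ⟨lam2, h2⟩ := hAne t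
    exact ⟨lam2, fun x hx => hABle t x hx lam2 h2⟩
  have hAcl : ∀ t : ℝ, IsClosed {lam : ℝ | lam • v - d t ∈ K} := by
    intro t
    have h0 : {lam : ℝ | lam • v - d t ∈ K} = (fun lam : ℝ => lam • v - d t) ⁻¹' K := rfl
    rw [h0]
    exact hKclosed.preimage ((continuous_id.smul continuous_const).sub continuous_const)
  have hBcl : ∀ t : ℝ, IsClosed {lam : ℝ | d t - lam • v ∈ K} := by
    intro t
    have h0 : {lam : ℝ | d t - lam • v ∈ K} = (fun lam : ℝ => d t - lam • v) ⁻¹' K := rfl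
    rw [h0]
    exact hKclosed.preimage (continuous_const.sub (continuous_id.smul continuous_const))
  obtain ⟨a, ha⟩ : ∃ a : ℝ → ℝ, ∀ t, a t = sInf {lam : ℝ | lam • v - d t ∈ K} :=
    ⟨_, fun _ => rfl⟩
  obtain ⟨b, hbe⟩ : ∃ b : ℝ → ℝ, ∀ t, b t = sSup {lam : ℝ | d t - lam • v ∈ K} :=
    ⟨_, fun _ => rfl⟩
  have haA : ∀ t : ℝ, a t • v - d t ∈ K := by
    intro t
    have h0 := (hAcl t).csInf_mem (hAne t) (hAbdd t)
    rw [← ha t] at h0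
    exact h0
  have hbB : ∀ t : ℝ, d t - b t • v ∈ K := by
    intro t
    have h0 := (hBcl t).csSup_mem (hBne t) (hBbddA t)
    rw [← hbe t] at h0
    exact h0
  have hba : ∀ t : ℝ, b t ≤ a t := fun t => hABle t (b t) (hbB t) (a t) (haA t)
  -- equality propagation
  have heqprop : ∀ t₀ : ℝ, 0 ≤ t₀ → ∀ lam : ℝ, d t₀ = lam • v →
      ∀ t : ℝ, t₀ ≤ t → d t = lam • v := by
    intro t₀ ht₀ lam hlam t ht
    rw [hd] at hlam
    have hkey : φ (t₀ + τ) ξ = φ t₀ ξ + lam • v := by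
      have h0 := sub_eq_iff_eq_add.1 hlam
      rw [h0]; abel
    have e1 : φ (t + τ) ξ = φ (t - t₀) (φ (t₀ + τ) ξ) := by
      have h0 := hsemi ξ hξ (t₀ + τ) (by linarith) (t - t₀) (by linarith)
      have harg : (t₀ + τ) + (t - t₀) = t + τ := by ring
      rwa [harg] at h0
    have e3 : φ (t - t₀) (φ t₀ ξ) = φ t ξ := by
      have h0 := hsemi ξ hξ t₀ ht₀ (t - t₀) (by linarith)
      have harg : t₀ + (t - t₀) = t := by ring
      rw [harg] at h0
      exact h0.symm
    have e2 : φ (t - t₀) (φ (t₀ + τ) ξ) = φ t ξ + lam • v := by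
      rw [hkey, htrans _ (hφXt t₀ ht₀) lam _ (by linarith), e3]
    rw [hd, e1, e2]
    abel
  -- strict steps
  have hstep : ∀ t : ℝ, 0 ≤ t → ∀ s : ℝ, 0 < s → ∀ lam : ℝ, lam • v - d t ∈ K →
      lam • v ≠ d t → lam • v - d (t + s) ∈ interior K := by
    intro t ht s hs lam hmem hne
    rw [hd] at hmem hne
    have hx1 : φ t ξ + lam • v ∈ X := hXtrans _ (hφXt t ht) lam
    have hx2 : φ (t + τ) ξ ∈ X := hφXt _ (by linarith)
    have hsub : (φ t ξ + lam • v) - φ (t + τ) ξ ∈ K := by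
      have heq : (φ t ξ + lam • v) - φ (t + τ) ξ = lam • v - (φ (t + τ) ξ - φ t ξ) := by abel
      rw [heq]; exact hmem
    have hneq : φ t ξ + lam • v ≠ φ (t + τ) ξ := by
      intro h
      apply hne
      rw [← h]; abel
    have hint := hmono _ hx1 _ hx2 s hs hsub hneq
    rw [htrans _ (hφXt t ht) lam s hs.le] at hint
    rw [← hsemi ξ hξ t ht s hs.le, ← hsemi ξ hξ (t+τ) (by linarith) s hs.le] at hint
    have harg : (t + τ) + s = (t + s) + τ := by ring
    rw [harg] at hint
    have heq : φ (t+s) ξ + lam • v - φ ((t+s) + τ) ξ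
        = lam • v - (φ ((t+s) + τ) ξ - φ (t+s) ξ) := by abel
    rw [heq] at hint
    rw [hd]
    exact hint
  have hstepB : ∀ t : ℝ, 0 ≤ t → ∀ s : ℝ, 0 < s → ∀ lam : ℝ, d t - lam • v ∈ K →
      d t ≠ lam • v → d (t + s) - lam • v ∈ interior K := by
    intro t ht s hs lam hmem hne
    rw [hd] at hmem hne
    have hx2 : φ t ξ + lam • v ∈ X := hXtrans _ (hφXt t ht) lam
    have hx1 : φ (t + τ) ξ ∈ X := hφXt _ (by linarith)
    have hsub : φ (t + τ) ξ - (φ t ξ + lam • v) ∈ K := by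
      have heq : φ (t + τ) ξ - (φ t ξ + lam • v) = (φ (t + τ) ξ - φ t ξ) - lam • v := by abel
      rw [heq]; exact hmem
    have hneq : φ (t + τ) ξ ≠ φ t ξ + lam • v := by
      intro h
      apply hne
      rw [h]; abel
    have hint := hmono _ hx1 _ hx2 s hs hsub hneq
    rw [htrans _ (hφXt t ht) lam s hs.le] at hint
    rw [← hsemi ξ hξ t ht s hs.le, ← hsemi ξ hξ (t+τ) (by linarith) s hs.le] at hint
    have harg : (t + τ) + s = (t + s) + τ := by ring
    rw [harg] at hint
    have heq : φ ((t+s) + τ) ξ - (φ (t+s) ξ + lam • v)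
        = (φ ((t+s) + τ) ξ - φ (t+s) ξ) - lam • v := by abel
    rw [heq] at hint
    rw [hd]
    exact hint
  -- weak monotonicity
  have hAmono : ∀ t : ℝ, 0 ≤ t → ∀ s : ℝ, 0 ≤ s → ∀ lam : ℝ, lam • v - d t ∈ K →
      lam • v - d (t + s) ∈ K := by
    intro t ht s hs lam hmem
    rcases eq_or_lt_of_le hs with h | h
    · rw [← h, add_zero]; exact hmem
    by_cases hne : lam • v = d t
    · have h0 := heqprop t ht lam hne.symm (t + s) (by linarith)
      rw [h0, sub_self]
      exact hK0
    · exact interior_subset (hstep t ht s h lam hmem hne)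
  have hBmono : ∀ t : ℝ, 0 ≤ t → ∀ s : ℝ, 0 ≤ s → ∀ lam : ℝ, d t - lam • v ∈ K →
      d (t + s) - lam • v ∈ K := by
    intro t ht s hs lam hmem
    rcases eq_or_lt_of_le hs with h | h
    · rw [← h, add_zero]; exact hmem
    by_cases hne : d t = lam • v
    · have h0 := heqprop t ht lam hne (t + s) (by linarith)
      rw [h0, sub_self]
      exact hK0
    · exact interior_subset (hstepB t ht s h lam hmem hne)
  have haMono : ∀ t : ℝ, 0 ≤ t → ∀ s : ℝ, 0 ≤ s → a (t + s) ≤ a t := by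
    intro t ht s hs
    rw [ha (t+s)]
    exact csInf_le (hAbdd _) (hAmono t ht s hs (a t) (haA t))
  have hbMono : ∀ t : ℝ, 0 ≤ t → ∀ s : ℝ, 0 ≤ s → b t ≤ b (t + s) := by
    intro t ht s hs
    rw [hbe (t+s)]
    exact le_csSup (hBbddA _) (hBmono t ht s hs (b t) (hbB t))
  -- limits abar, bbar
  have haimgne : (a '' Ici 0).Nonempty := ⟨a 0, 0, self_mem_Ici, rfl⟩
  have hbimgne : (b '' Ici 0).Nonempty := ⟨b 0, 0, self_mem_Ici, rfl⟩
  have haimgbdd : BddBelow (a '' Ici 0) := by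
    refine ⟨b 0, ?_⟩
    rintro _ ⟨t, ht, rfl⟩
    have h1 : b 0 ≤ b t := by have h0 := hbMono 0 le_rfl t ht; rwa [zero_add] at h0
    exact h1.trans (hba t)
  have hbimgbdd : BddAbove (b '' Ici 0) := by
    refine ⟨a 0, ?_⟩
    rintro _ ⟨t, ht, rfl⟩
    have h1 : a t ≤ a 0 := by have h0 := haMono 0 le_rfl t ht; rwa [zero_add] at h0
    exact (hba t).trans h1
  set abar : ℝ := sInf (a '' Ici 0) with habar
  set bbar : ℝ := sSup (b '' Ici 0) with hbbar
  have habar_le : ∀ t : ℝ, 0 ≤ t → abar ≤ a t := fun t ht => csInf_le haimgbdd ⟨t, ht, rfl⟩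
  have hbbar_ge : ∀ t : ℝ, 0 ≤ t → b t ≤ bbar := fun t ht => le_csSup hbimgbdd ⟨t, ht, rfl⟩
  have haconv : ∀ ε : ℝ, 0 < ε → ∃ t₀ : ℝ, 0 ≤ t₀ ∧ ∀ t : ℝ, t₀ ≤ t → a t < abar + ε := by
    intro ε hε
    obtain ⟨_, ⟨t₁, ht₁, rfl⟩, hlt⟩ := exists_lt_of_csInf_lt haimgne
      (lt_add_of_pos_right abar hε)
    refine ⟨t₁, ht₁, fun t ht => lt_of_le_of_lt ?_ hlt⟩
    have h := haMono t₁ ht₁ (t - t₁) (by linarith)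
    have harg : t₁ + (t - t₁) = t := by ring
    rwa [harg] at h
  have hbconv : ∀ ε : ℝ, 0 < ε → ∃ t₀ : ℝ, 0 ≤ t₀ ∧ ∀ t : ℝ, t₀ ≤ t → bbar - ε < b t := by
    intro ε hε
    obtain ⟨_, ⟨t₁, ht₁, rfl⟩, hlt⟩ := exists_lt_of_lt_csSup hbimgne
      (sub_lt_self bbar hε)
    refine ⟨t₁, ht₁, fun t ht => lt_of_lt_of_le hlt ?_⟩
    have h := hbMono t₁ ht₁ (t - t₁) (by linarith)
    have harg : t₁ + (t - t₁) = t := by ring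
    rwa [harg] at h
  by_cases hsp : ∃ t₀ : ℝ, 0 ≤ t₀ ∧ ∃ lam : ℝ, d t₀ = lam • v
  · -- degenerate case: d eventually equals lam • v
    obtain ⟨t₀, ht₀, lam, hlam⟩ := hsp
    have hEv : ∀ᶠ t : ℝ in atTop, Metric.infDist (φ (t + τ) ξ - φ t ξ)
        (Submodule.span ℝ {v} : Set (EuclideanSpace ℝ (Fin n))) = 0 := by
      filter_upwards [eventually_ge_atTop t₀] with t ht
      have hdt := heqprop t₀ ht₀ lam hlam t ht
      rw [hd] at hdt
      have hmem : φ (t + τ) ξ - φ t ξ ∈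
          (Submodule.span ℝ {v} : Set (EuclideanSpace ℝ (Fin n))) := by
        rw [hdt]
        exact Submodule.smul_mem _ lam (Submodule.mem_span_singleton_self v)
      exact Metric.infDist_zero_of_mem hmem
    exact tendsto_const_nhds.congr' (hEv.mono fun t h => h.symm)
  · push_neg at hsp
    have key : abar ≤ bbar := by
      by_contra hgt
      push_neg at hgt
      obtain ⟨M, hM⟩ := hbd
      obtain ⟨η, hη⟩ : ∃ η : ℕ → EuclideanSpace ℝ (Fin n), ∀ k : ℕ,
          η k = φ (k:ℝ) ξ - (inner ℝ v (φ (k:ℝ) ξ) : ℝ) • v := ⟨_, fun _ => rfl⟩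
      have hηX : ∀ k, η k ∈ X := by
        intro k
        rw [hη]
        have h0 := hXtrans _ (hφXt (k:ℝ) (Nat.cast_nonneg k)) (-(inner ℝ v (φ (k:ℝ) ξ) : ℝ))
        rwa [neg_smul, ← sub_eq_add_neg] at h0
      have hηbd : ∀ k, η k ∈ Metric.closedBall (0 : EuclideanSpace ℝ (Fin n)) M := by
        intro k
        rw [Metric.mem_closedBall, dist_zero_right, hη]
        have h0 := hM (k:ℝ) (Nat.cast_nonneg k)
        rwa [piProj] at h0
      obtain ⟨w, hwmem, σ, hσ, hηlim⟩ :=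
        (isCompact_closedBall (0 : EuclideanSpace ℝ (Fin n)) M).tendsto_subseq hηbd
      have hwX : w ∈ X := hXclosed.mem_of_tendsto hηlim
        (Eventually.of_forall fun j => hηX _)
      have hflow : ∀ k : ℕ, ∀ r : ℝ, 0 ≤ r →
          φ r (η k) = φ ((k:ℝ) + r) ξ - (inner ℝ v (φ (k:ℝ) ξ) : ℝ) • v := by
        intro k r hr
        rw [hη, sub_eq_add_neg, ← neg_smul]
        rw [htrans _ (hφXt _ (Nat.cast_nonneg k)) _ r hr]
        rw [← hsemi ξ hξ (k:ℝ) (Nat.cast_nonneg k) r hr]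
        rw [neg_smul, ← sub_eq_add_neg]
      have hdk : ∀ k : ℕ, ∀ r : ℝ, 0 ≤ r →
          d ((k:ℝ) + r) = φ (r + τ) (η k) - φ r (η k) := by
        intro k r hr
        rw [hflow k r hr, hflow k (r + τ) (by linarith)]
        rw [hd]
        have harg : (k:ℝ) + (r + τ) = ((k:ℝ) + r) + τ := by ring
        rw [harg]
        abel
      have hflowlim : ∀ r ∈ Icc (0:ℝ) (τ + 1),
          Tendsto (fun j => φ r (η (σ j))) atTop (𝓝 (φ r w)) := by
        intro r hr
        rw [Metric.tendsto_atTop]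
        intro ε hε
        obtain ⟨δ, hδ, hδ'⟩ := hcontdep w hwX (τ + 1) (by linarith) (ε/2) (by linarith)
        obtain ⟨N, hN⟩ := Metric.tendsto_atTop.1 hηlim δ hδ
        refine ⟨N, fun j hj => ?_⟩
        have h1 : dist (η (σ j)) w ≤ δ := (hN j hj).le
        have h2 := hδ' (η (σ j)) (hηX _) h1 r hr
        calc dist (φ r (η (σ j))) (φ r w) ≤ ε/2 := h2
          _ < ε := by linarith
      have hdlim0 : Tendsto (fun j => d (((σ j : ℕ) : ℝ))) atTop (𝓝 (φ τ w - w)) := by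
        have h1 := hflowlim τ ⟨hτ.le, by linarith⟩
        have h2 := hflowlim 0 ⟨le_rfl, by linarith⟩
        have h3 := h1.sub h2
        rw [hφ0 _ hwX] at h3
        apply h3.congr
        intro j
        have h4 := hdk (σ j) 0 le_rfl
        rw [add_zero, zero_add] at h4
        exact h4.symm
      have hdlim1 : Tendsto (fun j => d (((σ j : ℕ) : ℝ) + 1)) atTop
          (𝓝 (φ (1 + τ) w - φ 1 w)) := by
        have h1 := hflowlim (1 + τ) ⟨by linarith, by linarith⟩
        have h2 := hflowlim 1 ⟨zero_le_one, by linarith⟩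
        have h3 := h1.sub h2
        apply h3.congr
        intro j
        exact (hdk (σ j) 1 zero_le_one).symm
      have hσcast : ∀ j : ℕ, (j:ℝ) ≤ ((σ j : ℕ) : ℝ) := fun j => Nat.cast_le.2 hσ.le_apply
      have haσ : Tendsto (fun j => a (((σ j : ℕ) : ℝ))) atTop (𝓝 abar) := by
        rw [Metric.tendsto_atTop]
        intro ε hε
        obtain ⟨t₀, ht₀, ht₀'⟩ := haconv ε hε
        refine ⟨⌈t₀⌉₊, fun j hj => ?_⟩
        have h1 : t₀ ≤ ((σ j : ℕ) : ℝ) := by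
          calc t₀ ≤ (⌈t₀⌉₊ : ℝ) := Nat.le_ceil t₀
            _ ≤ (j : ℝ) := Nat.cast_le.2 hj
            _ ≤ _ := hσcast j
        have h2 := ht₀' _ h1
        have h3 := habar_le _ (le_trans ht₀ h1)
        rw [Real.dist_eq, abs_lt]
        constructor <;> linarith
      have hbσ : Tendsto (fun j => b (((σ j : ℕ) : ℝ))) atTop (𝓝 bbar) := by
        rw [Metric.tendsto_atTop]
        intro ε hε
        obtain ⟨t₀, ht₀, ht₀'⟩ := hbconv ε hε
        refine ⟨⌈t₀⌉₊, fun j hj => ?_⟩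
        have h1 : t₀ ≤ ((σ j : ℕ) : ℝ) := by
          calc t₀ ≤ (⌈t₀⌉₊ : ℝ) := Nat.le_ceil t₀
            _ ≤ (j : ℝ) := Nat.cast_le.2 hj
            _ ≤ _ := hσcast j
        have h2 := ht₀' _ h1
        have h3 := hbbar_ge _ (le_trans ht₀ h1)
        rw [Real.dist_eq, abs_lt]
        constructor <;> linarith
      have hmemA : abar • v - (φ τ w - w) ∈ K :=
        hKclosed.mem_of_tendsto ((haσ.smul_const v).sub hdlim0)
          (Eventually.of_forall fun j => haA _)
      have hmemB : (φ τ w - w) - bbar • v ∈ K :=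
        hKclosed.mem_of_tendsto (hdlim0.sub (hbσ.smul_const v))
          (Eventually.of_forall fun j => hbB _)
      rcases eq_or_ne (φ τ w - w) (abar • v) with hDeq | hDeq
      · have hx1 : φ τ w ∈ X := hφX _ hwX τ hτ.le
        have hx2 : w + bbar • v ∈ X := hXtrans _ hwX bbar
        have hsub : φ τ w - (w + bbar • v) ∈ K := by
          have heq : φ τ w - (w + bbar • v) = (φ τ w - w) - bbar • v := by abel
          rw [heq]; exact hmemB
        have hneq : φ τ w ≠ w + bbar • v := by
          intro h
          have h1 : φ τ w - w = bbar • v := by rw [h]; abel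
          rw [hDeq] at h1
          have h2 : (abar - bbar) • v = 0 := by rw [sub_smul, h1, sub_self]
          rcases smul_eq_zero.1 h2 with h3 | h3
          · have h4 := sub_eq_zero.1 h3
            linarith
          · exact hvne h3
        have hint := hmono _ hx1 _ hx2 1 one_pos hsub hneq
        rw [htrans _ hwX bbar 1 zero_le_one] at hint
        rw [← hsemi _ hwX τ hτ.le 1 zero_le_one] at hint
        have harg : τ + 1 = 1 + τ := by ring
        rw [harg] at hint
        have hint' : (φ (1 + τ) w - φ 1 w) - bbar • v ∈ interior K := by
          have heq : (φ (1 + τ) w - φ 1 w) - bbar • v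
              = φ (1 + τ) w - (φ 1 w + bbar • v) := by abel
          rw [heq]; exact hint
        obtain ⟨ρ, hρ, hball⟩ := Metric.isOpen_iff.1 isOpen_interior _ hint'
        obtain ⟨N, hN⟩ := Metric.tendsto_atTop.1 hdlim1 (ρ/2) (by linarith)
        have hj := hN N le_rfl
        have hmem2 : d (((σ N : ℕ) : ℝ) + 1) - (bbar + ρ/2) • v ∈ interior K := by
          apply hball
          rw [Metric.mem_ball, dist_eq_norm]
          have heq : d (((σ N : ℕ) : ℝ) + 1) - (bbar + ρ/2) • v
              - ((φ (1 + τ) w - φ 1 w) - bbar • v)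
              = (d (((σ N : ℕ) : ℝ) + 1) - (φ (1 + τ) w - φ 1 w)) + (-(ρ/2)) • v := by
            rw [add_smul, neg_smul]; abel
          rw [heq]
          have h1 : ‖d (((σ N : ℕ) : ℝ) + 1) - (φ (1 + τ) w - φ 1 w)‖ < ρ/2 := by
            rw [← dist_eq_norm]; exact hj
          have h2 : ‖(-(ρ/2)) • v‖ = ρ/2 := by
            rw [norm_smul, Real.norm_eq_abs, abs_neg, abs_of_pos (by linarith), hvnorm, mul_one]
          calc ‖(d (((σ N : ℕ) : ℝ) + 1) - (φ (1 + τ) w - φ 1 w)) + (-(ρ/2)) • v‖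
              ≤ ‖d (((σ N : ℕ) : ℝ) + 1) - (φ (1 + τ) w - φ 1 w)‖ + ‖(-(ρ/2)) • v‖ :=
                norm_add_le _ _
            _ < ρ := by rw [h2]; linarith
        have h3 : bbar + ρ/2 ≤ b (((σ N : ℕ) : ℝ) + 1) := by
          rw [hbe]
          refine le_csSup (hBbddA _) ?_
          show d (((σ N : ℕ) : ℝ) + 1) - (bbar + ρ/2) • v ∈ K
          exact interior_subset hmem2
        have h4 : b (((σ N : ℕ) : ℝ) + 1) ≤ bbar := hbbar_ge _ (by positivity)
        linarith
      · have hx1 : w + abar • v ∈ X := hXtrans _ hwX abar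
        have hx2 : φ τ w ∈ X := hφX _ hwX τ hτ.le
        have hsub : (w + abar • v) - φ τ w ∈ K := by
          have heq : (w + abar • v) - φ τ w = abar • v - (φ τ w - w) := by abel
          rw [heq]; exact hmemA
        have hneq : w + abar • v ≠ φ τ w := by
          intro h
          apply hDeq
          rw [← h]; abel
        have hint := hmono _ hx1 _ hx2 1 one_pos hsub hneq
        rw [htrans _ hwX abar 1 zero_le_one] at hint
        rw [← hsemi _ hwX τ hτ.le 1 zero_le_one] at hint
        have harg : τ + 1 = 1 + τ := by ring
        rw [harg] at hint
        have hint' : abar • v - (φ (1 + τ) w - φ 1 w) ∈ interior K := by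
          have heq : abar • v - (φ (1 + τ) w - φ 1 w)
              = φ 1 w + abar • v - φ (1 + τ) w := by abel
          rw [heq]; exact hint
        obtain ⟨ρ, hρ, hball⟩ := Metric.isOpen_iff.1 isOpen_interior _ hint'
        obtain ⟨N, hN⟩ := Metric.tendsto_atTop.1 hdlim1 (ρ/2) (by linarith)
        have hj := hN N le_rfl
        have hmem2 : (abar - ρ/2) • v - d (((σ N : ℕ) : ℝ) + 1) ∈ interior K := by
          apply hball
          rw [Metric.mem_ball, dist_eq_norm]
          have heq : (abar - ρ/2) • v - d (((σ N : ℕ) : ℝ) + 1)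
              - (abar • v - (φ (1 + τ) w - φ 1 w))
              = ((φ (1 + τ) w - φ 1 w) - d (((σ N : ℕ) : ℝ) + 1)) + (-(ρ/2)) • v := by
            rw [sub_smul, neg_smul]; abel
          rw [heq]
          have h1 : ‖(φ (1 + τ) w - φ 1 w) - d (((σ N : ℕ) : ℝ) + 1)‖ < ρ/2 := by
            rw [← dist_eq_norm, dist_comm]; exact hj
          have h2 : ‖(-(ρ/2)) • v‖ = ρ/2 := by
            rw [norm_smul, Real.norm_eq_abs, abs_neg, abs_of_pos (by linarith), hvnorm, mul_one]
          calc ‖((φ (1 + τ) w - φ 1 w) - d (((σ N : ℕ) : ℝ) + 1)) + (-(ρ/2)) • v‖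
              ≤ ‖(φ (1 + τ) w - φ 1 w) - d (((σ N : ℕ) : ℝ) + 1)‖ + ‖(-(ρ/2)) • v‖ :=
                norm_add_le _ _
            _ < ρ := by rw [h2]; linarith
        have h3 : a (((σ N : ℕ) : ℝ) + 1) ≤ abar - ρ/2 := by
          rw [ha]
          refine csInf_le (hAbdd _) ?_
          show (abar - ρ/2) • v - d (((σ N : ℕ) : ℝ) + 1) ∈ K
          exact interior_subset hmem2
        have h4 : abar ≤ a (((σ N : ℕ) : ℝ) + 1) := habar_le _ (by positivity)
        linarith
    -- final squeeze
    rw [Metric.tendsto_atTop]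
    intro ε hε
    obtain ⟨t₁, ht₁, ht₁'⟩ := haconv (ε / (2 * (M₀ + 1))) (by positivity)
    obtain ⟨t₂, ht₂, ht₂'⟩ := hbconv (ε / (2 * (M₀ + 1))) (by positivity)
    refine ⟨max t₁ t₂, fun t ht => ?_⟩
    have h0t : 0 ≤ t := le_trans (le_trans ht₁ (le_max_left _ _)) ht
    have h1 : a t < abar + ε / (2 * (M₀ + 1)) := ht₁' t (le_trans (le_max_left _ _) ht)
    have h2 : bbar - ε / (2 * (M₀ + 1)) < b t := ht₂' t (le_trans (le_max_right _ _) ht)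
    have h3 : a t - b t < 2 * (ε / (2 * (M₀ + 1))) := by linarith
    have hz2 : (a t - b t) • v - (d t - b t • v) ∈ K := by
      have heq : (a t - b t) • v - (d t - b t • v) = a t • v - d t := by
        rw [sub_smul]; abel
      rw [heq]; exact haA t
    have h5 : ‖d t - b t • v‖ ≤ M₀ * (a t - b t) :=
      hbound _ (by linarith [hba t]) _ (hbB t) hz2
    have h6 : Metric.infDist (d t) (Submodule.span ℝ {v} : Set (EuclideanSpace ℝ (Fin n)))
        ≤ ‖d t - b t • v‖ := by
      have hmem : (b t) • v ∈ (Submodule.span ℝ {v} : Set (EuclideanSpace ℝ (Fin n))) :=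
        Submodule.smul_mem _ _ (Submodule.mem_span_singleton_self v)
      calc Metric.infDist (d t) (Submodule.span ℝ {v} : Set (EuclideanSpace ℝ (Fin n)))
          ≤ dist (d t) (b t • v) := Metric.infDist_le_dist_of_mem hmem
        _ = ‖d t - b t • v‖ := dist_eq_norm _ _
    have h7 : (0:ℝ) ≤ Metric.infDist (d t)
        (Submodule.span ℝ {v} : Set (EuclideanSpace ℝ (Fin n))) :=
      Metric.infDist_nonneg
    have h8 : M₀ * (a t - b t) < ε := by
      have hM1 : (0:ℝ) < M₀ + 1 := by linarith
      have hlt2 : a t - b t < ε / (M₀ + 1) := by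
        have heq2 : 2 * (ε / (2 * (M₀ + 1))) = ε / (M₀ + 1) := by
          field_simp
        rwa [heq2] at h3
      have h9 : M₀ * (a t - b t) < M₀ * (ε / (M₀ + 1)) := by
        exact mul_lt_mul_of_pos_left hlt2 hM₀pos
      have h10 : M₀ * (ε / (M₀ + 1)) < (M₀ + 1) * (ε / (M₀ + 1)) := by
        apply mul_lt_mul_of_pos_right (by linarith)
        positivity
      have h11 : (M₀ + 1) * (ε / (M₀ + 1)) = ε := by
        field_simp
      linarith
    rw [← hd t, Real.dist_0_eq_abs, abs_of_nonneg h7]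
    linarith
end

section
/- Let the strongly monotone, forward complete system ẋ = f(x) on X be translation invariant along the unit vector v ∈ interior(K), with X closed and invariant under translations by v, and let ξ ∈ X be such that the solution φ_t(ξ) is bounded modulo v. Then every ω-limit point of the projected trajectory is an equilibrium of the projected system: if t_n → ∞ and π_v(φ_{t_n}(ξ)) → p, then p ∈ X ∩ v^⊥ and f(p) ∈ span{v}. -/
open Filter Topology Set

variable {n : ℕ}

/-- The set of shifts `μ` such that `w + μ v ∈ K`. -/
def sAset (K : Set (EuclideanSpace ℝ (Fin n))) (v w : EuclideanSpace ℝ (Fin n)) : Set ℝ :=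
  {μ : ℝ | w + μ • v ∈ K}

/-- One-sided gauge. -/
noncomputable def Np (K : Set (EuclideanSpace ℝ (Fin n))) (v w : EuclideanSpace ℝ (Fin n)) : ℝ :=
  sInf (sAset K v w)

/-- Symmetric gauge (a seminorm vanishing exactly on `ℝ v`). -/
noncomputable def Nn (K : Set (EuclideanSpace ℝ (Fin n))) (v w : EuclideanSpace ℝ (Fin n)) : ℝ :=
  Np K v w + Np K v (-w)

section Cone

variable {K : Set (EuclideanSpace ℝ (Fin n))} {v : EuclideanSpace ℝ (Fin n)} {ε : ℝ}

lemma Kzero (hKcone : ∀ c : ℝ, 0 ≤ c → ∀ x ∈ K, c • x ∈ K) (hv : v ∈ interior K) :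
    (0 : EuclideanSpace ℝ (Fin n)) ∈ K := by
  have := hKcone 0 le_rfl v (interior_subset hv)
  simpa using this

lemma Kadd (hKconv : Convex ℝ K) (hKcone : ∀ c : ℝ, 0 ≤ c → ∀ x ∈ K, c • x ∈ K)
    {a b : EuclideanSpace ℝ (Fin n)} (ha : a ∈ K) (hb : b ∈ K) : a + b ∈ K := by
  have hm : (1/2 : ℝ) • a + (1/2 : ℝ) • b ∈ K :=
    hKconv ha hb (by norm_num) (by norm_num) (by norm_num)
  have := hKcone 2 (by norm_num) _ hm
  rw [smul_add, smul_smul, smul_smul] at this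
  norm_num at this
  exact this

lemma mem_sA (hKcone : ∀ c : ℝ, 0 ≤ c → ∀ x ∈ K, c • x ∈ K) (hv : v ∈ interior K)
    (hε : 0 < ε) (hball : Metric.ball v ε ⊆ K) (w : EuclideanSpace ℝ (Fin n)) :
    2 / ε * ‖w‖ ∈ sAset K v w := by
  rcases eq_or_ne w 0 with rfl | hw
  · simp only [sAset, mem_setOf_eq, norm_zero, mul_zero, zero_smul, add_zero, zero_add]
    exact Kzero hKcone hv
  · have hwn : 0 < ‖w‖ := norm_pos_iff.mpr hw
    set μ : ℝ := 2 / ε * ‖w‖ with hμdef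
    have hμ : 0 < μ := by positivity
    have hmem : v + μ⁻¹ • w ∈ Metric.ball v ε := by
      rw [Metric.mem_ball, dist_eq_norm]
      have : v + μ⁻¹ • w - v = μ⁻¹ • w := by abel
      rw [this, norm_smul, Real.norm_eq_abs, abs_inv, abs_of_pos hμ]
      rw [hμdef]
      rw [show (2 / ε * ‖w‖)⁻¹ * ‖w‖ = ε / 2 by field_simp]
      linarith
    have : μ • (v + μ⁻¹ • w) ∈ K := hKcone μ hμ.le _ (hball hmem)
    rw [smul_add, smul_smul, mul_inv_cancel₀ hμ.ne', one_smul] at this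
    simpa [sAset, add_comm] using this

lemma coef_nonneg (hKcone : ∀ c : ℝ, 0 ≤ c → ∀ x ∈ K, c • x ∈ K)
    (hKpointed : ∀ x ∈ K, -x ∈ K → x = 0) (hv : v ∈ interior K) (hvnorm : ‖v‖ = 1)
    {c : ℝ} (h : c • v ∈ K) : 0 ≤ c := by
  by_contra hc
  push_neg at hc
  have hr : (0:ℝ) ≤ -c⁻¹ := by
    have : c⁻¹ < 0 := inv_neg''.mpr hc
    linarith
  have h2 : (-c⁻¹) • (c • v) ∈ K := hKcone _ hr _ h
  rw [smul_smul] at h2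
  have : (-c⁻¹) * c = -1 := by rw [neg_mul, inv_mul_cancel₀ hc.ne]
  rw [this, neg_one_smul] at h2
  have hvK : v ∈ K := interior_subset hv
  have := hKpointed v hvK h2
  rw [this] at hvnorm
  simp at hvnorm

lemma sA_lb (hKconv : Convex ℝ K) (hKcone : ∀ c : ℝ, 0 ≤ c → ∀ x ∈ K, c • x ∈ K)
    (hKpointed : ∀ x ∈ K, -x ∈ K → x = 0) (hv : v ∈ interior K) (hvnorm : ‖v‖ = 1)
    (hε : 0 < ε) (hball : Metric.ball v ε ⊆ K) {w : EuclideanSpace ℝ (Fin n)} {μ : ℝ}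
    (hμ : μ ∈ sAset K v w) : -(2 / ε * ‖w‖) ≤ μ := by
  have h1 : -w + (2 / ε * ‖w‖) • v ∈ K := by
    have := mem_sA hKcone hv hε hball (-w)
    simpa [sAset, norm_neg] using this
  have h2 : (w + μ • v) + (-w + (2 / ε * ‖w‖) • v) ∈ K := Kadd hKconv hKcone hμ h1
  have h3 : (w + μ • v) + (-w + (2 / ε * ‖w‖) • v) = (μ + 2 / ε * ‖w‖) • v := by
    rw [add_smul]; abel
  rw [h3] at h2
  have := coef_nonneg hKcone hKpointed hv hvnorm h2
  linarith

lemma sA_bddBelow (hKconv : Convex ℝ K) (hKcone : ∀ c : ℝ, 0 ≤ c → ∀ x ∈ K, c • x ∈ K)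
    (hKpointed : ∀ x ∈ K, -x ∈ K → x = 0) (hv : v ∈ interior K) (hvnorm : ‖v‖ = 1)
    (hε : 0 < ε) (hball : Metric.ball v ε ⊆ K) (w : EuclideanSpace ℝ (Fin n)) :
    BddBelow (sAset K v w) :=
  ⟨-(2 / ε * ‖w‖), fun _ hμ => sA_lb hKconv hKcone hKpointed hv hvnorm hε hball hμ⟩

lemma sA_nonempty (hKcone : ∀ c : ℝ, 0 ≤ c → ∀ x ∈ K, c • x ∈ K) (hv : v ∈ interior K)
    (hε : 0 < ε) (hball : Metric.ball v ε ⊆ K) (w : EuclideanSpace ℝ (Fin n)) :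
    (sAset K v w).Nonempty :=
  ⟨_, mem_sA hKcone hv hε hball w⟩

lemma sA_closed (hKclosed : IsClosed K) (w : EuclideanSpace ℝ (Fin n)) :
    IsClosed (sAset K v w) := by
  have hc : Continuous fun μ : ℝ => w + μ • v := by continuity
  exact hKclosed.preimage hc

end Cone
section Gauge

variable {K : Set (EuclideanSpace ℝ (Fin n))} {v : EuclideanSpace ℝ (Fin n)} {ε : ℝ}
variable (hKclosed : IsClosed K) (hKconv : Convex ℝ K)
  (hKcone : ∀ c : ℝ, 0 ≤ c → ∀ x ∈ K, c • x ∈ K)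
  (hKpointed : ∀ x ∈ K, -x ∈ K → x = 0)
  (hv : v ∈ interior K) (hvnorm : ‖v‖ = 1)
  (hε : 0 < ε) (hball : Metric.ball v ε ⊆ K)

include hKclosed hKconv hKcone hKpointed hv hvnorm hε hball in
lemma Np_mem (w : EuclideanSpace ℝ (Fin n)) : w + (Np K v w) • v ∈ K :=
  (sA_closed hKclosed w).csInf_mem (sA_nonempty hKcone hv hε hball w)
    (sA_bddBelow hKconv hKcone hKpointed hv hvnorm hε hball w)

include hKconv hKcone hKpointed hv hvnorm hε hball in
lemma Np_le_of_mem {w : EuclideanSpace ℝ (Fin n)} {μ : ℝ} (hμ : μ ∈ sAset K v w) :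
    Np K v w ≤ μ :=
  csInf_le (sA_bddBelow hKconv hKcone hKpointed hv hvnorm hε hball w) hμ

include hKconv hKcone hKpointed hv hvnorm hε hball in
lemma Np_le (w : EuclideanSpace ℝ (Fin n)) : Np K v w ≤ 2 / ε * ‖w‖ :=
  Np_le_of_mem hKconv hKcone hKpointed hv hvnorm hε hball (mem_sA hKcone hv hε hball w)

include hKconv hKcone hKpointed hv hvnorm hε hball in
lemma Np_ge (w : EuclideanSpace ℝ (Fin n)) : -(2 / ε * ‖w‖) ≤ Np K v w :=
  le_csInf (sA_nonempty hKcone hv hε hball w)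
    (fun _ hμ => sA_lb hKconv hKcone hKpointed hv hvnorm hε hball hμ)

include hKclosed hKconv hKcone hKpointed hv hvnorm hε hball in
lemma Np_add_le (w₁ w₂ : EuclideanSpace ℝ (Fin n)) :
    Np K v (w₁ + w₂) ≤ Np K v w₁ + Np K v w₂ := by
  apply Np_le_of_mem hKconv hKcone hKpointed hv hvnorm hε hball
  have h1 := Np_mem hKclosed hKconv hKcone hKpointed hv hvnorm hε hball w₁
  have h2 := Np_mem hKclosed hKconv hKcone hKpointed hv hvnorm hε hball w₂
  have := Kadd hKconv hKcone h1 h2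
  have heq : w₁ + Np K v w₁ • v + (w₂ + Np K v w₂ • v)
      = (w₁ + w₂) + (Np K v w₁ + Np K v w₂) • v := by rw [add_smul]; abel
  rw [heq] at this
  exact this

include hKclosed hKconv hKcone hKpointed hv hvnorm hε hball in
lemma Np_shift (w : EuclideanSpace ℝ (Fin n)) (c : ℝ) :
    Np K v (w + c • v) = Np K v w - c := by
  have key : ∀ (u : EuclideanSpace ℝ (Fin n)) (d : ℝ),
      Np K v (u + d • v) ≤ Np K v u - d := by
    intro u d
    apply Np_le_of_mem hKconv hKcone hKpointed hv hvnorm hε hball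
    have := Np_mem hKclosed hKconv hKcone hKpointed hv hvnorm hε hball u
    have heq : (u + d • v) + (Np K v u - d) • v = u + Np K v u • v := by
      rw [sub_smul]; abel
    rw [show sAset K v (u + d • v) = {μ : ℝ | (u + d • v) + μ • v ∈ K} from rfl]
    simp only [mem_setOf_eq]
    rw [heq]
    exact this
  have h1 := key w c
  have h2 := key (w + c • v) (-c)
  have heq : w + c • v + (-c) • v = w := by rw [neg_smul]; abel
  rw [heq] at h2
  linarith

include hKclosed hKconv hKcone hKpointed hv hvnorm hε hball in
lemma Np_smul {a : ℝ} (ha : 0 < a) (w : EuclideanSpace ℝ (Fin n)) :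
    Np K v (a • w) = a * Np K v w := by
  have key : ∀ (b : ℝ), 0 < b → ∀ (u : EuclideanSpace ℝ (Fin n)),
      Np K v (b • u) ≤ b * Np K v u := by
    intro b hb u
    apply Np_le_of_mem hKconv hKcone hKpointed hv hvnorm hε hball
    have := hKcone b hb.le _ (Np_mem hKclosed hKconv hKcone hKpointed hv hvnorm hε hball u)
    rw [smul_add, smul_smul] at this
    exact this
  have h1 := key a ha w
  have h2 := key a⁻¹ (inv_pos.mpr ha) (a • w)
  rw [smul_smul, inv_mul_cancel₀ ha.ne', one_smul] at h2
  have := mul_le_mul_of_nonneg_left h2 ha.le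
  rw [← mul_assoc, mul_inv_cancel₀ ha.ne', one_mul] at this
  linarith

include hKconv hKcone hKpointed hv hvnorm hε hball in
lemma Nn_nonneg (w : EuclideanSpace ℝ (Fin n)) : 0 ≤ Nn K v w := by
  have h1 := Np_ge hKconv hKcone hKpointed hv hvnorm hε hball w
  -- better: use that sums of members are nonneg
  have key : ∀ μ ∈ sAset K v w, ∀ lam ∈ sAset K v (-w), 0 ≤ μ + lam := by
    intro μ hμ lam hlam
    have := Kadd hKconv hKcone hμ hlam
    have heq : (w + μ • v) + (-w + lam • v) = (μ + lam) • v := by rw [add_smul]; abel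
    rw [heq] at this
    exact coef_nonneg hKcone hKpointed hv hvnorm this
  have h2 : -Np K v (-w) ≤ Np K v w := by
    apply le_csInf (sA_nonempty hKcone hv hε hball w)
    intro μ hμ
    rw [neg_le]
    apply le_csInf (sA_nonempty hKcone hv hε hball (-w))
    intro lam hlam
    have := key μ hμ lam hlam
    linarith
  unfold Nn; linarith

include hKclosed hKconv hKcone hKpointed hv hvnorm hε hball in
lemma Nn_le (w : EuclideanSpace ℝ (Fin n)) : Nn K v w ≤ 4 / ε * ‖w‖ := by
  have h1 := Np_le hKconv hKcone hKpointed hv hvnorm hε hball w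
  have h2 := Np_le hKconv hKcone hKpointed hv hvnorm hε hball (-w)
  rw [norm_neg] at h2
  unfold Nn
  have : 2 / ε * ‖w‖ + 2 / ε * ‖w‖ = 4 / ε * ‖w‖ := by ring
  linarith

lemma Nn_neg (w : EuclideanSpace ℝ (Fin n)) : Nn K v (-w) = Nn K v w := by
  unfold Nn; rw [neg_neg]; ring

include hKclosed hKconv hKcone hKpointed hv hvnorm hε hball in
lemma Nn_add_le (w₁ w₂ : EuclideanSpace ℝ (Fin n)) :
    Nn K v (w₁ + w₂) ≤ Nn K v w₁ + Nn K v w₂ := by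
  have h1 := Np_add_le hKclosed hKconv hKcone hKpointed hv hvnorm hε hball w₁ w₂
  have h2 := Np_add_le hKclosed hKconv hKcone hKpointed hv hvnorm hε hball (-w₁) (-w₂)
  rw [show -w₁ + -w₂ = -(w₁ + w₂) by abel] at h2
  unfold Nn; linarith

include hKclosed hKconv hKcone hKpointed hv hvnorm hε hball in
lemma Nn_shift (w : EuclideanSpace ℝ (Fin n)) (c : ℝ) :
    Nn K v (w + c • v) = Nn K v w := by
  unfold Nn
  rw [Np_shift hKclosed hKconv hKcone hKpointed hv hvnorm hε hball w c]
  rw [show -(w + c • v) = -w + (-c) • v by rw [neg_smul]; abel]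
  rw [Np_shift hKclosed hKconv hKcone hKpointed hv hvnorm hε hball (-w) (-c)]
  ring

include hKclosed hKconv hKcone hKpointed hv hvnorm hε hball in
lemma Nn_smul {a : ℝ} (ha : 0 < a) (w : EuclideanSpace ℝ (Fin n)) :
    Nn K v (a • w) = a * Nn K v w := by
  unfold Nn
  rw [Np_smul hKclosed hKconv hKcone hKpointed hv hvnorm hε hball ha w,
    show -(a • w) = a • (-w) by rw [smul_neg],
    Np_smul hKclosed hKconv hKcone hKpointed hv hvnorm hε hball ha (-w)]
  ring

include hKclosed hKconv hKcone hKpointed hv hvnorm hε hball in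
lemma Nn_eq_zero {w : EuclideanSpace ℝ (Fin n)} (h : Nn K v w = 0)
    (hw : (inner ℝ v w : ℝ) = 0) : w = 0 := by
  set r := Np K v w with hr
  have h1 := Np_mem hKclosed hKconv hKcone hKpointed hv hvnorm hε hball w
  have h2 := Np_mem hKclosed hKconv hKcone hKpointed hv hvnorm hε hball (-w)
  rw [← hr] at h1
  have hlam : Np K v (-w) = -r := by unfold Nn at h; linarith
  rw [hlam] at h2
  have hneg : -w + (-r) • v = -(w + r • v) := by rw [neg_smul]; abel
  rw [hneg] at h2
  have hz := hKpointed _ h1 h2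
  have hw2 : w = (-r) • v := by
    rw [neg_smul]
    linear_combination (norm := abel) hz
  have hinner : (inner ℝ v w : ℝ) = -r := by
    conv_lhs => rw [hw2]
    rw [real_inner_smul_right, real_inner_self_eq_norm_mul_norm, hvnorm]
    ring
  rw [hw] at hinner
  rw [hw2, ← hinner]
  simp

end Gauge
section GaugeTop

variable {K : Set (EuclideanSpace ℝ (Fin n))} {v : EuclideanSpace ℝ (Fin n)} {ε : ℝ}
variable (hKclosed : IsClosed K) (hKconv : Convex ℝ K)
  (hKcone : ∀ c : ℝ, 0 ≤ c → ∀ x ∈ K, c • x ∈ K)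
  (hKpointed : ∀ x ∈ K, -x ∈ K → x = 0)
  (hv : v ∈ interior K) (hvnorm : ‖v‖ = 1)
  (hε : 0 < ε) (hball : Metric.ball v ε ⊆ K)

include hKclosed hKconv hKcone hKpointed hv hvnorm hε hball in
lemma Nn_dist (a b : EuclideanSpace ℝ (Fin n)) :
    |Nn K v a - Nn K v b| ≤ 4 / ε * ‖a - b‖ := by
  have h1 : Nn K v a ≤ Nn K v b + Nn K v (a - b) := by
    have := Nn_add_le hKclosed hKconv hKcone hKpointed hv hvnorm hε hball b (a - b)
    rw [show b + (a - b) = a by abel] at this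
    linarith
  have h2 : Nn K v b ≤ Nn K v a + Nn K v (a - b) := by
    have := Nn_add_le hKclosed hKconv hKcone hKpointed hv hvnorm hε hball a (b - a)
    rw [show a + (b - a) = b by abel] at this
    have hn : Nn K v (b - a) = Nn K v (a - b) := by
      rw [show b - a = -(a - b) by abel, Nn_neg]
    linarith [hn ▸ this]
  have h3 := Nn_le hKclosed hKconv hKcone hKpointed hv hvnorm hε hball (a - b)
  rw [abs_sub_le_iff]
  constructor <;> linarith

include hKclosed hKconv hKcone hKpointed hv hvnorm hε hball in
lemma Nn_continuous : Continuous (Nn K v) := by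
  rw [Metric.continuous_iff]
  intro a δ hδ
  refine ⟨δ / (4 / ε + 1), by positivity, fun b hb => ?_⟩
  have h := Nn_dist hKclosed hKconv hKcone hKpointed hv hvnorm hε hball b a
  rw [Real.dist_eq]
  calc |Nn K v b - Nn K v a| ≤ 4 / ε * ‖b - a‖ := h
    _ ≤ (4 / ε + 1) * ‖b - a‖ := by
        have : (0:ℝ) ≤ ‖b - a‖ := norm_nonneg _
        nlinarith [div_nonneg (by norm_num : (0:ℝ) ≤ 4) hε.le]
    _ < (4 / ε + 1) * (δ / (4 / ε + 1)) := by
        apply mul_lt_mul_of_pos_left _ (by positivity)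
        rw [← dist_eq_norm]
        exact hb
    _ = δ := by field_simp
  
include hKclosed hKconv hKcone hKpointed hv hvnorm hε hball in
lemma Nn_lower_bound : ∃ c : ℝ, 0 < c ∧ ∀ w : EuclideanSpace ℝ (Fin n),
    (inner ℝ v w : ℝ) = 0 → c * ‖w‖ ≤ Nn K v w := by
  classical
  set S : Set (EuclideanSpace ℝ (Fin n)) :=
    {w | (inner ℝ v w : ℝ) = 0} ∩ Metric.sphere 0 1 with hS
  by_cases hSne : S.Nonempty
  · have hScomp : IsCompact S := by
      apply (isCompact_sphere (0 : EuclideanSpace ℝ (Fin n)) 1).inter_left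
      exact isClosed_eq (continuous_const.inner continuous_id) continuous_const
    obtain ⟨w₀, hw₀S, hw₀min⟩ := hScomp.exists_isMinOn hSne
      ((Nn_continuous hKclosed hKconv hKcone hKpointed hv hvnorm hε hball).continuousOn)
    have hw₀ne : w₀ ≠ 0 := by
      intro h
      have := hw₀S.2
      rw [h] at this
      simp at this
    have hc : 0 < Nn K v w₀ := by
      rcases lt_or_eq_of_le (Nn_nonneg hKconv hKcone hKpointed hv hvnorm hε hball w₀) with h | h
      · exact h
      · exact absurd (Nn_eq_zero hKclosed hKconv hKcone hKpointed hv hvnorm hε hball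
          h.symm hw₀S.1) hw₀ne
    refine ⟨Nn K v w₀, hc, fun w hw => ?_⟩
    rcases eq_or_ne w 0 with rfl | hwne
    · simp only [norm_zero, mul_zero]
      exact Nn_nonneg hKconv hKcone hKpointed hv hvnorm hε hball 0
    · have hwn : 0 < ‖w‖ := norm_pos_iff.mpr hwne
      have hmem : ‖w‖⁻¹ • w ∈ S := by
        constructor
        · simp only [mem_setOf_eq, real_inner_smul_right, hw, mul_zero]
        · simp [norm_smul, abs_of_pos (inv_pos.mpr hwn), inv_mul_cancel₀ hwn.ne']
      have := hw₀min hmem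
      have heq := Nn_smul hKclosed hKconv hKcone hKpointed hv hvnorm hε hball
        (inv_pos.mpr hwn) w
      simp only [IsMinOn, IsMinFilter] at this
      have h2 : Nn K v w₀ ≤ ‖w‖⁻¹ * Nn K v w := heq ▸ this
      calc Nn K v w₀ * ‖w‖ ≤ (‖w‖⁻¹ * Nn K v w) * ‖w‖ :=
            mul_le_mul_of_nonneg_right h2 hwn.le
        _ = Nn K v w := by field_simp
  · refine ⟨1, one_pos, fun w hw => ?_⟩
    rcases eq_or_ne w 0 with rfl | hwne
    · simp only [norm_zero, mul_zero]
      exact Nn_nonneg hKconv hKcone hKpointed hv hvnorm hε hball 0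
    · exfalso
      apply hSne
      have hwn : 0 < ‖w‖ := norm_pos_iff.mpr hwne
      refine ⟨‖w‖⁻¹ • w, ?_, ?_⟩
      · simp only [mem_setOf_eq, real_inner_smul_right, hw, mul_zero]
      · simp [norm_smul, abs_of_pos (inv_pos.mpr hwn), inv_mul_cancel₀ hwn.ne']

end GaugeTop
section Flow

variable {K X : Set (EuclideanSpace ℝ (Fin n))}
  {f : EuclideanSpace ℝ (Fin n) → EuclideanSpace ℝ (Fin n)}
  {φ : ℝ → EuclideanSpace ℝ (Fin n) → EuclideanSpace ℝ (Fin n)}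
  {v : EuclideanSpace ℝ (Fin n)} {ε : ℝ}

variable (hKclosed : IsClosed K) (hKconv : Convex ℝ K)
  (hKcone : ∀ c : ℝ, 0 ≤ c → ∀ x ∈ K, c • x ∈ K)
  (hKpointed : ∀ x ∈ K, -x ∈ K → x = 0)
  (hv : v ∈ interior K) (hvnorm : ‖v‖ = 1)
  (hε : 0 < ε) (hball : Metric.ball v ε ⊆ K)
  (hXtrans : ∀ x ∈ X, ∀ lam : ℝ, x + lam • v ∈ X)
  (hφ0 : ∀ ξ ∈ X, φ 0 ξ = ξ)
  (hmono : ∀ ξ₁ ∈ X, ∀ ξ₂ ∈ X, ∀ t : ℝ, 0 < t →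
      ξ₁ - ξ₂ ∈ K → ξ₁ ≠ ξ₂ → φ t ξ₁ - φ t ξ₂ ∈ interior K)
  (htrans : ∀ ξ ∈ X, ∀ lam t : ℝ, 0 ≤ t → φ t (ξ + lam • v) = φ t ξ + lam • v)

include hXtrans hφ0 hmono htrans in
lemma sA_flow {x y : EuclideanSpace ℝ (Fin n)} (hx : x ∈ X) (hy : y ∈ X)
    {u : ℝ} (hu : 0 ≤ u) {μ : ℝ} (hμ : μ ∈ sAset K v (x - y)) :
    μ ∈ sAset K v (φ u x - φ u y) := by
  rcases eq_or_lt_of_le hu with rfl | hu'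
  · rwa [hφ0 x hx, hφ0 y hy]
  · simp only [sAset, mem_setOf_eq] at hμ ⊢
    by_cases hxy : x + μ • v = y
    · have h1 : φ u (x + μ • v) = φ u y := by rw [hxy]
      rw [htrans x hx μ u hu] at h1
      rw [show φ u x - φ u y + μ • v = (φ u x + μ • v) - φ u y by abel, h1, sub_self]
      have : x - y + μ • v = (x + μ • v) - y := by abel
      rw [this, hxy, sub_self] at hμ
      exact hμ
    · have hK1 : (x + μ • v) - y ∈ K := by
        rw [show (x + μ • v) - y = x - y + μ • v by abel]
        exact hμ
      have := hmono (x + μ • v) (hXtrans x hx μ) y hy u hu' hK1 hxy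
      rw [htrans x hx μ u hu] at this
      rw [show φ u x + μ • v - φ u y = φ u x - φ u y + μ • v by abel] at this
      exact interior_subset this

include hKclosed hKconv hKcone hKpointed hv hvnorm hε hball hXtrans hφ0 hmono htrans in
lemma Nn_nonexpansive {x y : EuclideanSpace ℝ (Fin n)} (hx : x ∈ X) (hy : y ∈ X)
    {u : ℝ} (hu : 0 ≤ u) : Nn K v (φ u x - φ u y) ≤ Nn K v (x - y) := by
  have key : ∀ a ∈ X, ∀ b ∈ X, Np K v (φ u a - φ u b) ≤ Np K v (a - b) := by
    intro a ha b hb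
    apply le_trans (csInf_le_csInf
      (sA_bddBelow hKconv hKcone hKpointed hv hvnorm hε hball _)
      (sA_nonempty hKcone hv hε hball _)
      (fun μ hμ => sA_flow hXtrans hφ0 hmono htrans ha hb hu hμ))
    exact le_refl _
  have h1 := key x hx y hy
  have h2 := key y hy x hx
  unfold Nn
  rw [show -(φ u x - φ u y) = φ u y - φ u x by abel, show -(x - y) = y - x by abel]
  linarith

end Flow
section Semiflow

variable {X : Set (EuclideanSpace ℝ (Fin n))}
  {f : EuclideanSpace ℝ (Fin n) → EuclideanSpace ℝ (Fin n)}
  {φ : ℝ → EuclideanSpace ℝ (Fin n) → EuclideanSpace ℝ (Fin n)}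

variable
  (hf : ∀ x ∈ X, ∃ L : NNReal, ∃ U ∈ nhdsWithin x X, LipschitzOnWith L f U)
  (hφ0 : ∀ ξ ∈ X, φ 0 ξ = ξ)
  (hφX : ∀ ξ ∈ X, ∀ t : ℝ, 0 ≤ t → φ t ξ ∈ X)
  (hφode : ∀ ξ ∈ X, ∀ t : ℝ, 0 ≤ t →
      HasDerivWithinAt (fun s => φ s ξ) (f (φ t ξ)) (Set.Ici 0) t)

include hf hφ0 hφX hφode in
lemma semiflow {ξ' : EuclideanSpace ℝ (Fin n)} (hξ' : ξ' ∈ X) {a b : ℝ}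
    (ha : 0 ≤ a) (hb : 0 ≤ b) : φ (a + b) ξ' = φ b (φ a ξ') := by
  set ζ := φ a ξ' with hζdef
  have hζ : ζ ∈ X := hφX ξ' hξ' a ha
  set g : ℝ → EuclideanSpace ℝ (Fin n) := fun t => φ (a + t) ξ' with hgdef
  set h : ℝ → EuclideanSpace ℝ (Fin n) := fun t => φ t ζ with hhdef
  -- memberships
  have hgX : ∀ t : ℝ, 0 ≤ t → g t ∈ X := fun t ht => hφX ξ' hξ' (a + t) (by linarith)
  have hhX : ∀ t : ℝ, 0 ≤ t → h t ∈ X := fun t ht => hφX ζ hζ t ht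
  -- derivatives
  have hgderiv : ∀ t : ℝ, 0 ≤ t → HasDerivWithinAt g (f (g t)) (Set.Ici 0) t := by
    intro t ht
    have houter := hφode ξ' hξ' (a + t) (by linarith)
    have hinner : HasDerivWithinAt (fun s : ℝ => a + s) 1 (Set.Ici 0) t := by
      simpa using ((hasDerivAt_id t).const_add a).hasDerivWithinAt
    have hmap : Set.MapsTo (fun s : ℝ => a + s) (Set.Ici 0) (Set.Ici 0) :=
      fun s hs => by simp only [mem_Ici] at hs ⊢; linarith
    have := HasDerivWithinAt.scomp t houter hinner hmap
    simpa [hgdef, Function.comp_def] using this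
  have hhderiv : ∀ t : ℝ, 0 ≤ t → HasDerivWithinAt h (f (h t)) (Set.Ici 0) t :=
    fun t ht => hφode ζ hζ t ht
  -- continuity
  have hgcont : ∀ t : ℝ, 0 ≤ t → ContinuousWithinAt g (Set.Ici 0) t :=
    fun t ht => (hgderiv t ht).continuousWithinAt
  have hhcont : ∀ t : ℝ, 0 ≤ t → ContinuousWithinAt h (Set.Ici 0) t :=
    fun t ht => (hhderiv t ht).continuousWithinAt
  have hinit : g 0 = h 0 := by
    simp only [hgdef, hhdef, add_zero]
    rw [hφ0 ζ hζ]
  -- main claim : g = h on [0, T] for every T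
  suffices hmain : g b = h b by simpa [hgdef, hhdef] using hmain
  set A : Set ℝ := {t : ℝ | t ∈ Icc 0 b ∧ EqOn g h (Icc 0 t)} with hA
  have h0A : (0:ℝ) ∈ A := by
    refine ⟨⟨le_rfl, hb⟩, fun t ht => ?_⟩
    have : t = 0 := le_antisymm ht.2 ht.1
    rw [this, hinit]
  have hAne : A.Nonempty := ⟨0, h0A⟩
  have hAbdd : BddAbove A := ⟨b, fun t ht => ht.1.2⟩
  set τ := sSup A with hτdef
  have hτ0 : 0 ≤ τ := le_csSup hAbdd h0A
  have hτb : τ ≤ b := csSup_le hAne fun t ht => ht.1.2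
  -- g = h on [0, τ)
  have hIco : ∀ s ∈ Ico 0 τ, g s = h s := by
    intro s hs
    obtain ⟨s', hs'A, hss'⟩ := exists_lt_of_lt_csSup hAne hs.2
    exact hs'A.2 ⟨hs.1, hss'.le⟩
  have hgτeq : g τ = h τ := by
    rcases eq_or_lt_of_le hτ0 with h0t | h0t
    · rw [← h0t, hinit]
    · have hne : (𝓝[Ico 0 τ] τ).NeBot := by
        rw [← mem_closure_iff_nhdsWithin_neBot, closure_Ico (by linarith : (0:ℝ) ≠ τ)]
        exact ⟨by linarith, le_rfl⟩
      have hgt : Tendsto g (𝓝[Ico 0 τ] τ) (𝓝 (g τ)) :=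
        (hgcont τ hτ0).mono_left (nhdsWithin_mono τ (fun s hs => hs.1))
      have hht : Tendsto h (𝓝[Ico 0 τ] τ) (𝓝 (h τ)) :=
        (hhcont τ hτ0).mono_left (nhdsWithin_mono τ (fun s hs => hs.1))
      have : Tendsto g (𝓝[Ico 0 τ] τ) (𝓝 (h τ)) := by
        refine hht.congr' ?_
        filter_upwards [self_mem_nhdsWithin] with s hs
        exact (hIco s hs).symm
      exact tendsto_nhds_unique hgt this
  have hτeq : EqOn g h (Icc 0 τ) := by
    intro t ht
    rcases lt_or_eq_of_le ht.2 with htlt | hteq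
    · exact hIco t ⟨ht.1, htlt⟩
    · rw [hteq]; exact hgτeq
  have hτA : τ ∈ A := ⟨⟨hτ0, hτb⟩, hτeq⟩
  -- τ = b
  have hτeqb : τ = b := by
    by_contra hne
    have hτltb : τ < b := lt_of_le_of_ne hτb hne
    -- local Lipschitz data at x₀ = g τ
    have hx₀X : g τ ∈ X := hgX τ hτ0
    obtain ⟨L, U, hU, hLip⟩ := hf (g τ) hx₀X
    obtain ⟨r, hr, hrU⟩ := Metric.mem_nhdsWithin_iff.mp hU
    -- continuity of g and h at τ within Ici 0
    have hgτ : Tendsto g (𝓝[Ici 0] τ) (𝓝 (g τ)) := hgcont τ hτ0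
    have hhτ : Tendsto h (𝓝[Ici 0] τ) (𝓝 (g τ)) := by
      have h2 := hhcont τ hτ0
      unfold ContinuousWithinAt at h2
      rwa [← hgτeq] at h2
    rw [Metric.tendsto_nhdsWithin_nhds] at hgτ hhτ
    obtain ⟨δ₁, hδ₁, hg1⟩ := hgτ r hr
    obtain ⟨δ₂, hδ₂, hh1⟩ := hhτ r hr
    set δ := min δ₁ δ₂ with hδdef
    have hδpos : 0 < δ := lt_min hδ₁ hδ₂
    set b' := min b (τ + δ / 2) with hb'def
    have hτb' : τ < b' := lt_min hτltb (by linarith)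
    have hb'b : b' ≤ b := min_le_left _ _
    -- apply uniqueness on [τ, b']
    have hU' : EqOn g h (Icc τ b') := by
      apply ODE_solution_unique_of_mem_Icc_right
        (v := fun _ : ℝ => f) (s := fun _ : ℝ => U) (K := L)
        (fun _ _ => hLip)
      · intro t ht
        exact (hgcont t (le_trans hτ0 ht.1)).mono (fun s hs => le_trans hτ0 hs.1)
      · intro t ht
        exact ((hgderiv t (le_trans hτ0 ht.1)).mono
          (Ici_subset_Ici.mpr (le_trans hτ0 ht.1)))
      · intro t ht
        apply hrU
        refine ⟨?_, hgX t (le_trans hτ0 ht.1)⟩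
        rw [Metric.mem_ball]
        apply hg1 (le_trans hτ0 ht.1)
        rw [Real.dist_eq, abs_of_nonneg (by linarith [ht.1] : (0:ℝ) ≤ t - τ)]
        have : t < b' := ht.2
        have : t < τ + δ / 2 := lt_of_lt_of_le this (min_le_right _ _)
        have : t - τ < δ / 2 := by linarith
        calc t - τ < δ / 2 := this
          _ < δ := by linarith
          _ ≤ δ₁ := min_le_left _ _
      · intro t ht
        exact (hhcont t (le_trans hτ0 ht.1)).mono (fun s hs => le_trans hτ0 hs.1)
      · intro t ht
        exact ((hhderiv t (le_trans hτ0 ht.1)).mono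
          (Ici_subset_Ici.mpr (le_trans hτ0 ht.1)))
      · intro t ht
        apply hrU
        refine ⟨?_, hhX t (le_trans hτ0 ht.1)⟩
        rw [Metric.mem_ball]
        apply hh1 (le_trans hτ0 ht.1)
        rw [Real.dist_eq, abs_of_nonneg (by linarith [ht.1] : (0:ℝ) ≤ t - τ)]
        have : t < b' := ht.2
        have : t < τ + δ / 2 := lt_of_lt_of_le this (min_le_right _ _)
        have : t - τ < δ / 2 := by linarith
        calc t - τ < δ / 2 := this
          _ < δ := by linarith
          _ ≤ δ₂ := min_le_right _ _
      · exact hτeq ⟨hτ0, le_rfl⟩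
    have hb'A : b' ∈ A := by
      refine ⟨⟨le_trans hτ0 hτb'.le, hb'b⟩, fun t ht => ?_⟩
      rcases le_or_gt t τ with h1 | h1
      · exact hτeq ⟨ht.1, h1⟩
      · exact hU' ⟨h1.le, ht.2⟩
    have := le_csSup hAbdd hb'A
    rw [← hτdef] at this
    linarith
  have : b ∈ A := hτeqb ▸ hτA
  exact this.2 ⟨hb, le_rfl⟩

end Semiflow
section PiProj

variable {v : EuclideanSpace ℝ (Fin n)}

lemma piProj_eq_add (v x : EuclideanSpace ℝ (Fin n)) :
    piProj v x = x + (-(inner ℝ v x : ℝ)) • v := by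
  rw [piProj, neg_smul, ← sub_eq_add_neg]

lemma inner_piProj (hvnorm : ‖v‖ = 1) (x : EuclideanSpace ℝ (Fin n)) :
    (inner ℝ v (piProj v x) : ℝ) = 0 := by
  unfold piProj
  rw [inner_sub_right, real_inner_smul_right, real_inner_self_eq_norm_mul_norm, hvnorm]
  ring

lemma piProj_add_smul (hvnorm : ‖v‖ = 1) (x : EuclideanSpace ℝ (Fin n)) (c : ℝ) :
    piProj v (x + c • v) = piProj v x := by
  unfold piProj
  rw [inner_add_right, real_inner_smul_right, real_inner_self_eq_norm_mul_norm, hvnorm]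
  simp only [mul_one, add_smul]
  abel

lemma piProj_decomp (v x : EuclideanSpace ℝ (Fin n)) :
    piProj v x + (inner ℝ v x : ℝ) • v = x := by
  unfold piProj; abel

lemma piProj_sub_piProj (a b : EuclideanSpace ℝ (Fin n)) :
    piProj v a - piProj v b = (a - b) + ((inner ℝ v b : ℝ) - (inner ℝ v a : ℝ)) • v := by
  unfold piProj
  rw [sub_smul]
  abel

end PiProj

section NnPiProj

variable {K : Set (EuclideanSpace ℝ (Fin n))} {v : EuclideanSpace ℝ (Fin n)} {ε : ℝ}
variable (hKclosed : IsClosed K) (hKconv : Convex ℝ K)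
  (hKcone : ∀ c : ℝ, 0 ≤ c → ∀ x ∈ K, c • x ∈ K)
  (hKpointed : ∀ x ∈ K, -x ∈ K → x = 0)
  (hv : v ∈ interior K) (hvnorm : ‖v‖ = 1)
  (hε : 0 < ε) (hball : Metric.ball v ε ⊆ K)

include hKclosed hKconv hKcone hKpointed hv hvnorm hε hball in
lemma Nn_piProj_sub (a b : EuclideanSpace ℝ (Fin n)) :
    Nn K v (piProj v a - piProj v b) = Nn K v (a - b) := by
  rw [piProj_sub_piProj, Nn_shift hKclosed hKconv hKcone hKpointed hv hvnorm hε hball]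

include hKclosed hKconv hKcone hKpointed hv hvnorm hε hball in
lemma Nn_zero' : Nn K v 0 = 0 := by
  have h1 := Nn_le hKclosed hKconv hKcone hKpointed hv hvnorm hε hball
    (0 : EuclideanSpace ℝ (Fin n))
  have h2 := Nn_nonneg hKconv hKcone hKpointed hv hvnorm hε hball
    (0 : EuclideanSpace ℝ (Fin n))
  simp only [norm_zero, mul_zero] at h1
  linarith

end NnPiProj
/-- for a strongly monotone, forward complete system `ẋ = f(x)` on `X`,
translation invariant along the unit vector `v ∈ interior K`, with `X` closed and
invariant under translations by `v`, and a solution `φ_t(ξ)` bounded modulo `v`, every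
ω-limit point of the projected trajectory is an equilibrium of the projected system:
if `t_n → ∞` and `π_v(φ_{t_n}(ξ)) → p`, then `p ∈ X ∩ v^⊥` and `f(p) ∈ span{v}`. -/
theorem stmt14 {n : ℕ} (K X : Set (EuclideanSpace ℝ (Fin n)))
    (f : EuclideanSpace ℝ (Fin n) → EuclideanSpace ℝ (Fin n))
    (φ : ℝ → EuclideanSpace ℝ (Fin n) → EuclideanSpace ℝ (Fin n))
    (v : EuclideanSpace ℝ (Fin n))
    -- K is a closed pointed convex cone with nonempty interior
    (hKclosed : IsClosed K) (hKconv : Convex ℝ K)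
    (hKcone : ∀ c : ℝ, 0 ≤ c → ∀ x ∈ K, c • x ∈ K)
    (hKpointed : ∀ x ∈ K, -x ∈ K → x = 0)
    (hv : v ∈ interior K) (hvnorm : ‖v‖ = 1)
    -- X is closed, the closure of its interior, and invariant under translations by v
    (hXclosed : IsClosed X) (hXreg : X = closure (interior X))
    (hXtrans : ∀ x ∈ X, ∀ lam : ℝ, x + lam • v ∈ X)
    -- f is locally Lipschitz on X
    (hf : ∀ x ∈ X, ∃ L : NNReal, ∃ U ∈ nhdsWithin x X, LipschitzOnWith L f U)
    -- φ is the forward complete flow of ẋ = f(x) on X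
    (hφ0 : ∀ ξ ∈ X, φ 0 ξ = ξ)
    (hφX : ∀ ξ ∈ X, ∀ t : ℝ, 0 ≤ t → φ t ξ ∈ X)
    (hφode : ∀ ξ ∈ X, ∀ t : ℝ, 0 ≤ t →
      HasDerivWithinAt (fun s => φ s ξ) (f (φ t ξ)) (Set.Ici 0) t)
    -- strong monotonicity: ξ₁ ≻ ξ₂ ⟹ φ_t(ξ₁) ≫ φ_t(ξ₂) for t > 0
    (hmono : ∀ ξ₁ ∈ X, ∀ ξ₂ ∈ X, ∀ t : ℝ, 0 < t →
      ξ₁ - ξ₂ ∈ K → ξ₁ ≠ ξ₂ → φ t ξ₁ - φ t ξ₂ ∈ interior K)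
    -- translation invariance along v
    (htrans : ∀ ξ ∈ X, ∀ lam t : ℝ, 0 ≤ t → φ t (ξ + lam • v) = φ t ξ + lam • v)
    -- the solution through ξ is bounded modulo v
    (ξ : EuclideanSpace ℝ (Fin n)) (hξ : ξ ∈ X)
    (hbd : ∃ M : ℝ, ∀ t : ℝ, 0 ≤ t → ‖piProj v (φ t ξ)‖ ≤ M)
    -- p is an ω-limit point of the projected trajectory
    (tn : ℕ → ℝ) (htn0 : ∀ m : ℕ, 0 ≤ tn m) (htn : Tendsto tn atTop atTop)
    (p : EuclideanSpace ℝ (Fin n))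
    (hp : Tendsto (fun m : ℕ => piProj v (φ (tn m) ξ)) atTop (𝓝 p)) :
    p ∈ X ∧ (inner ℝ v p : ℝ) = 0 ∧ ∃ r : ℝ, f p = r • v := by
  classical
  obtain ⟨ε, hε, hball⟩ : ∃ ε > 0, Metric.ball v ε ⊆ K :=
    Metric.mem_nhds_iff.mp (mem_interior_iff_mem_nhds.mp hv)
  obtain ⟨M, hM⟩ := hbd
  set ψ : ℝ → EuclideanSpace ℝ (Fin n) := fun t => piProj v (φ t ξ) with hψdef
  have hψeq : ∀ t : ℝ, ψ t = piProj v (φ t ξ) := fun _ => rfl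
  have hψX : ∀ t : ℝ, 0 ≤ t → ψ t ∈ X := by
    intro t ht
    rw [hψeq, piProj_eq_add]
    exact hXtrans _ (hφX ξ hξ t ht) _
  have hψv : ∀ t : ℝ, (inner ℝ v (ψ t) : ℝ) = 0 := fun t => inner_piProj hvnorm _
  have hpψ : Tendsto (fun m => ψ (tn m)) atTop (𝓝 p) := hp
  have hpX : p ∈ X :=
    hXclosed.mem_of_tendsto hpψ (Eventually.of_forall fun m => hψX (tn m) (htn0 m))
  have hpv : (inner ℝ v p : ℝ) = 0 := by
    have h1 : Tendsto (fun m => (inner ℝ v (ψ (tn m)) : ℝ)) atTop (𝓝 (inner ℝ v p : ℝ)) :=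
      ((continuous_const.inner continuous_id).tendsto p).comp hpψ
    have h2 : (fun m => (inner ℝ v (ψ (tn m)) : ℝ)) = fun _ => (0 : ℝ) :=
      funext fun m => hψv _
    rw [h2] at h1
    exact tendsto_nhds_unique h1 tendsto_const_nhds
  refine ⟨hpX, hpv, ?_⟩
  -- gauge facts, abbreviated
  have hNn_shift : ∀ (w : EuclideanSpace ℝ (Fin n)) (c : ℝ), Nn K v (w + c • v) = Nn K v w :=
    fun w c => Nn_shift hKclosed hKconv hKcone hKpointed hv hvnorm hε hball w c
  have hNn_le : ∀ w : EuclideanSpace ℝ (Fin n), Nn K v w ≤ 4 / ε * ‖w‖ :=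
    fun w => Nn_le hKclosed hKconv hKcone hKpointed hv hvnorm hε hball w
  have hNn_nonneg : ∀ w : EuclideanSpace ℝ (Fin n), 0 ≤ Nn K v w :=
    fun w => Nn_nonneg hKconv hKcone hKpointed hv hvnorm hε hball w
  have hNn_add : ∀ w₁ w₂ : EuclideanSpace ℝ (Fin n),
      Nn K v (w₁ + w₂) ≤ Nn K v w₁ + Nn K v w₂ :=
    fun w₁ w₂ => Nn_add_le hKclosed hKconv hKcone hKpointed hv hvnorm hε hball w₁ w₂
  have hNn_pi : ∀ a b : EuclideanSpace ℝ (Fin n),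
      Nn K v (piProj v a - piProj v b) = Nn K v (a - b) :=
    fun a b => Nn_piProj_sub hKclosed hKconv hKcone hKpointed hv hvnorm hε hball a b
  have hNn_nonexp : ∀ x, x ∈ X → ∀ y, y ∈ X → ∀ u : ℝ, 0 ≤ u →
      Nn K v (φ u x - φ u y) ≤ Nn K v (x - y) :=
    fun x hx y hy u hu => Nn_nonexpansive hKclosed hKconv hKcone hKpointed hv hvnorm hε hball
      hXtrans hφ0 hmono htrans hx hy hu
  obtain ⟨c, hc, hclb⟩ := Nn_lower_bound hKclosed hKconv hKcone hKpointed hv hvnorm hε hball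
  -- semiflow and the key projection identity
  have hdecomp : ∀ t : ℝ, ψ t + (inner ℝ v (φ t ξ) : ℝ) • v = φ t ξ :=
    fun t => piProj_decomp v _
  have hsf : ∀ a b : ℝ, 0 ≤ a → 0 ≤ b → φ (a + b) ξ = φ b (φ a ξ) :=
    fun a b ha hb => semiflow hf hφ0 hφX hφode hξ ha hb
  have hψkey : ∀ t u : ℝ, 0 ≤ t → 0 ≤ u → ψ (t + u) = piProj v (φ u (ψ t)) := by
    intro t u ht hu
    have h1 : φ u (φ t ξ) = φ u (ψ t) + (inner ℝ v (φ t ξ) : ℝ) • v := by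
      conv_lhs => rw [← hdecomp t]
      exact htrans (ψ t) (hψX t ht) _ u hu
    rw [hψeq, hsf t u ht hu, h1, piProj_add_smul hvnorm]
  -- monotonicity of the gauge along shifted trajectories
  have hDmono : ∀ s : ℝ, 0 ≤ s → ∀ t₁ t₂ : ℝ, 0 ≤ t₁ → t₁ ≤ t₂ →
      Nn K v (ψ (t₂ + s) - ψ t₂) ≤ Nn K v (ψ (t₁ + s) - ψ t₁) := by
    intro s hs t₁ t₂ ht₁ ht₁₂
    obtain ⟨u, hu, rfl⟩ : ∃ u, 0 ≤ u ∧ t₂ = t₁ + u := ⟨t₂ - t₁, by linarith, by ring⟩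
    rw [show t₁ + u + s = (t₁ + s) + u by ring, hψkey (t₁ + s) u (by linarith) hu,
      hψkey t₁ u ht₁ hu, hNn_pi]
    exact hNn_nonexp _ (hψX _ (by linarith)) _ (hψX _ ht₁) u hu
  -- MAIN CLAIM: the gauge of the s-shift goes to 0 along tn
  have hLzero : ∀ s : ℝ, 0 ≤ s →
      Tendsto (fun m => Nn K v (ψ (tn m + s) - ψ (tn m))) atTop (𝓝 0) := by
    intro s hs
    set Ds : ℝ → ℝ := fun t => Nn K v (ψ (t + s) - ψ t) with hDs
    set Lset : Set ℝ := Ds '' Ici 0 with hLsetdef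
    have hLne : Lset.Nonempty := ⟨Ds 0, 0, self_mem_Ici, rfl⟩
    have hLbdd : BddBelow Lset := by
      refine ⟨0, ?_⟩
      rintro x ⟨t, -, rfl⟩
      exact hNn_nonneg _
    set L := sInf Lset with hLdef
    have hL0 : 0 ≤ L := le_csInf hLne (by rintro x ⟨t, -, rfl⟩; exact hNn_nonneg _)
    have hLle : ∀ t : ℝ, 0 ≤ t → L ≤ Ds t := fun t ht => csInf_le hLbdd ⟨t, ht, rfl⟩
    have hDtend : Tendsto (fun m => Ds (tn m)) atTop (𝓝 L) := by
      rw [Metric.tendsto_atTop]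
      intro e he
      obtain ⟨x, ⟨t₀, ht₀, rfl⟩, hx⟩ := exists_lt_of_csInf_lt hLne
        (show L < L + e by linarith)
      obtain ⟨N, hN⟩ := Filter.eventually_atTop.mp (htn.eventually (eventually_ge_atTop t₀))
      refine ⟨N, fun m hm => ?_⟩
      have h1 : Ds (tn m) ≤ Ds t₀ := hDmono s hs t₀ (tn m) ht₀ (hN m hm)
      have h2 : L ≤ Ds (tn m) := hLle (tn m) (htn0 m)
      rw [Real.dist_eq, abs_of_nonneg (by linarith)]
      linarith
    suffices hLz : L = 0 by
      rw [hLz] at hDtend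
      exact hDtend
    by_contra hLne0
    have hLpos : 0 < L := lt_of_le_of_ne hL0 (Ne.symm hLne0)
    -- compactness: extract a limit q of ψ (tn m + s)
    set Ω : Set (EuclideanSpace ℝ (Fin n)) :=
      (X ∩ {w | (inner ℝ v w : ℝ) = 0}) ∩ Metric.closedBall 0 M with hΩdef
    have hΩcomp : IsCompact Ω := (isCompact_closedBall 0 M).inter_left
      (hXclosed.inter (isClosed_eq (continuous_const.inner continuous_id) continuous_const))
    have hwmem : ∀ m, ψ (tn m + s) ∈ Ω := by
      intro m
      refine ⟨⟨hψX _ (by linarith [htn0 m]), hψv _⟩, ?_⟩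
      rw [Metric.mem_closedBall, dist_zero_right]
      exact hM _ (by linarith [htn0 m])
    obtain ⟨q, hqΩ, σ, hσmono, hσtend⟩ := hΩcomp.tendsto_subseq hwmem
    have hpσ : Tendsto (fun k => ψ (tn (σ k))) atTop (𝓝 p) := hpψ.comp hσmono.tendsto_atTop
    have hDσ : Tendsto (fun k => Ds (tn (σ k))) atTop (𝓝 L) :=
      hDtend.comp hσmono.tendsto_atTop
    have hNncont : Continuous (Nn K v) :=
      Nn_continuous hKclosed hKconv hKcone hKpointed hv hvnorm hε hball
    have hNtend : Tendsto (fun k => Ds (tn (σ k))) atTop (𝓝 (Nn K v (q - p))) := by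
      have h1 : Tendsto (fun k => ψ (tn (σ k) + s) - ψ (tn (σ k))) atTop (𝓝 (q - p)) :=
        hσtend.sub hpσ
      exact (hNncont.tendsto (q - p)).comp h1
    have hNqp : Nn K v (q - p) = L := tendsto_nhds_unique hNtend hDσ
    have hqX : q ∈ X := hqΩ.1.1
    have hqv : (inner ℝ v q : ℝ) = 0 := hqΩ.1.2
    have hqp : q ≠ p := by
      intro h
      rw [h, sub_self, Nn_zero' hKclosed hKconv hKcone hKpointed hv hvnorm hε hball] at hNqp
      linarith
    set β := Np K v (p - q) with hβdef
    set α := Np K v (q - p) with hαdef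
    have hNsum : Nn K v (q - p) = α + β := by
      have h1 : Nn K v (q - p) = Np K v (q - p) + Np K v (-(q - p)) := rfl
      rw [h1, show -(q - p) = p - q by abel]
    -- strict decrease: side 1
    have h1 : (p - q) + β • v ∈ K :=
      Np_mem hKclosed hKconv hKcone hKpointed hv hvnorm hε hball (p - q)
    have hne1 : p + β • v ≠ q := by
      intro h
      have h2 : p - q + β • v = 0 := by rw [← h]; abel
      have h3 : (inner ℝ v (p - q + β • v) : ℝ) = β := by
        rw [inner_add_right, inner_sub_right, hpv, hqv, real_inner_smul_right,
          real_inner_self_eq_norm_mul_norm, hvnorm]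
        ring
      rw [h2, inner_zero_right] at h3
      rw [← h3, zero_smul, add_zero, sub_eq_zero] at h2
      exact hqp h2.symm
    have hm1 := hmono (p + β • v) (hXtrans p hpX β) q hqX 1 one_pos
      (by rw [show p + β • v - q = (p - q) + β • v by abel]; exact h1) hne1
    rw [htrans p hpX β 1 zero_le_one] at hm1
    obtain ⟨δ₁, hδ₁, hball₁⟩ := Metric.mem_nhds_iff.mp (mem_interior_iff_mem_nhds.mp hm1)
    have hd1 : (φ 1 p - φ 1 q) + (β - δ₁ / 2) • v ∈ K := by
      apply hball₁
      rw [Metric.mem_ball, dist_eq_norm]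
      have he : (φ 1 p - φ 1 q) + (β - δ₁ / 2) • v - (φ 1 p + β • v - φ 1 q)
          = (-(δ₁ / 2)) • v := by
        rw [sub_smul, neg_smul]
        abel
      rw [he, norm_smul, Real.norm_eq_abs, hvnorm, mul_one, abs_neg,
        abs_of_pos (by linarith)]
      linarith
    have hNp1 : Np K v (φ 1 p - φ 1 q) ≤ β - δ₁ / 2 :=
      Np_le_of_mem hKconv hKcone hKpointed hv hvnorm hε hball hd1
    -- strict decrease: side 2
    have h2' : (q - p) + α • v ∈ K :=
      Np_mem hKclosed hKconv hKcone hKpointed hv hvnorm hε hball (q - p)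
    have hne2 : q + α • v ≠ p := by
      intro h
      have h2 : q - p + α • v = 0 := by rw [← h]; abel
      have h3 : (inner ℝ v (q - p + α • v) : ℝ) = α := by
        rw [inner_add_right, inner_sub_right, hpv, hqv, real_inner_smul_right,
          real_inner_self_eq_norm_mul_norm, hvnorm]
        ring
      rw [h2, inner_zero_right] at h3
      rw [← h3, zero_smul, add_zero, sub_eq_zero] at h2
      exact hqp h2
    have hm2 := hmono (q + α • v) (hXtrans q hqX α) p hpX 1 one_pos
      (by rw [show q + α • v - p = (q - p) + α • v by abel]; exact h2') hne2
    rw [htrans q hqX α 1 zero_le_one] at hm2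
    obtain ⟨δ₂, hδ₂, hball₂⟩ := Metric.mem_nhds_iff.mp (mem_interior_iff_mem_nhds.mp hm2)
    have hd2 : (φ 1 q - φ 1 p) + (α - δ₂ / 2) • v ∈ K := by
      apply hball₂
      rw [Metric.mem_ball, dist_eq_norm]
      have he : (φ 1 q - φ 1 p) + (α - δ₂ / 2) • v - (φ 1 q + α • v - φ 1 p)
          = (-(δ₂ / 2)) • v := by
        rw [sub_smul, neg_smul]
        abel
      rw [he, norm_smul, Real.norm_eq_abs, hvnorm, mul_one, abs_neg,
        abs_of_pos (by linarith)]
      linarith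
    have hNp2 : Np K v (φ 1 q - φ 1 p) ≤ α - δ₂ / 2 :=
      Np_le_of_mem hKconv hKcone hKpointed hv hvnorm hε hball hd2
    set d : ℝ := δ₁ / 2 + δ₂ / 2 with hddef
    have hdpos : 0 < d := by simp only [hddef]; linarith
    have hNfar : Nn K v (φ 1 q - φ 1 p) ≤ L - d := by
      have hN1 : Nn K v (φ 1 q - φ 1 p)
          = Np K v (φ 1 q - φ 1 p) + Np K v (φ 1 p - φ 1 q) := by
        have h1 : Nn K v (φ 1 q - φ 1 p)
            = Np K v (φ 1 q - φ 1 p) + Np K v (-(φ 1 q - φ 1 p)) := rfl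
        rw [h1, show -(φ 1 q - φ 1 p) = φ 1 p - φ 1 q by abel]
      have hab : α + β = L := by rw [← hNsum, hNqp]
      rw [hN1]
      simp only [hddef]
      linarith
    -- choose k far enough
    have htend1 : Tendsto (fun k => (4 / ε) * ‖ψ (tn (σ k) + s) - q‖) atTop (𝓝 0) := by
      have h0 : Tendsto (fun k => ψ (tn (σ k) + s) - q) atTop (𝓝 0) := by
        have := hσtend.sub (tendsto_const_nhds (x := q))
        rwa [sub_self] at this
      rw [tendsto_zero_iff_norm_tendsto_zero] at h0
      simpa using h0.const_mul (4 / ε)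
    have htend2 : Tendsto (fun k => (4 / ε) * ‖p - ψ (tn (σ k))‖) atTop (𝓝 0) := by
      have h0 : Tendsto (fun k => p - ψ (tn (σ k))) atTop (𝓝 0) := by
        have := (tendsto_const_nhds (x := p)).sub hpσ
        rwa [sub_self] at this
      rw [tendsto_zero_iff_norm_tendsto_zero] at h0
      simpa using h0.const_mul (4 / ε)
    obtain ⟨k, hk1, hk2⟩ := ((htend1.eventually_lt_const (by linarith : (0:ℝ) < d / 4)).and
      (htend2.eventually_lt_const (by linarith : (0:ℝ) < d / 4))).exists
    -- final contradiction
    have hA : ψ (tn (σ k) + 1 + s) = piProj v (φ 1 (ψ (tn (σ k) + s))) := by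
      rw [show tn (σ k) + 1 + s = (tn (σ k) + s) + 1 by ring]
      exact hψkey (tn (σ k) + s) 1 (by linarith [htn0 (σ k)]) zero_le_one
    have hB : ψ (tn (σ k) + 1) = piProj v (φ 1 (ψ (tn (σ k)))) :=
      hψkey _ 1 (htn0 _) zero_le_one
    have hDval : Ds (tn (σ k) + 1)
        = Nn K v (φ 1 (ψ (tn (σ k) + s)) - φ 1 (ψ (tn (σ k)))) := by
      show Nn K v (ψ ((tn (σ k) + 1) + s) - ψ (tn (σ k) + 1)) = _
      rw [show (tn (σ k) + 1) + s = tn (σ k) + 1 + s by ring, hA, hB, hNn_pi]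
    have hchain : Nn K v (φ 1 (ψ (tn (σ k) + s)) - φ 1 (ψ (tn (σ k))))
        ≤ Nn K v (φ 1 (ψ (tn (σ k) + s)) - φ 1 q) + Nn K v (φ 1 q - φ 1 p)
          + Nn K v (φ 1 p - φ 1 (ψ (tn (σ k)))) := by
      have he : φ 1 (ψ (tn (σ k) + s)) - φ 1 (ψ (tn (σ k)))
          = (φ 1 (ψ (tn (σ k) + s)) - φ 1 q)
            + ((φ 1 q - φ 1 p) + (φ 1 p - φ 1 (ψ (tn (σ k))))) := by abel
      rw [he]
      have h1 := hNn_add (φ 1 (ψ (tn (σ k) + s)) - φ 1 q)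
        ((φ 1 q - φ 1 p) + (φ 1 p - φ 1 (ψ (tn (σ k)))))
      have h2 := hNn_add (φ 1 q - φ 1 p) (φ 1 p - φ 1 (ψ (tn (σ k))))
      linarith
    have hterm1 : Nn K v (φ 1 (ψ (tn (σ k) + s)) - φ 1 q)
        ≤ (4 / ε) * ‖ψ (tn (σ k) + s) - q‖ :=
      le_trans (hNn_nonexp _ (hψX _ (by linarith [htn0 (σ k)])) q hqX 1 zero_le_one)
        (hNn_le _)
    have hterm2 : Nn K v (φ 1 p - φ 1 (ψ (tn (σ k))))
        ≤ (4 / ε) * ‖p - ψ (tn (σ k))‖ :=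
      le_trans (hNn_nonexp p hpX _ (hψX _ (htn0 (σ k))) 1 zero_le_one) (hNn_le _)
    have hfinal : L ≤ Ds (tn (σ k) + 1) := hLle _ (by linarith [htn0 (σ k)])
    rw [hDval] at hfinal
    have hk1' : 4 / ε * ‖ψ (tn (σ k) + s) - q‖ < d / 4 := hk1
    have hk2' : 4 / ε * ‖p - ψ (tn (σ k))‖ < d / 4 := hk2
    clear_value d
    linarith [hfinal, hchain, hterm1, hterm2, hk1', hk2', hNfar, hdpos]
  -- Step 3 : ψ (tn m + s) → p for every s ≥ 0
  have hconv : ∀ s : ℝ, 0 ≤ s → Tendsto (fun m => ψ (tn m + s)) atTop (𝓝 p) := by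
    intro s hs
    have hdiff : Tendsto (fun m => ψ (tn m + s) - ψ (tn m)) atTop (𝓝 0) := by
      rw [tendsto_zero_iff_norm_tendsto_zero]
      apply squeeze_zero (fun m => norm_nonneg _)
        (g := fun m => c⁻¹ * Nn K v (ψ (tn m + s) - ψ (tn m)))
      · intro m
        have hin : (inner ℝ v (ψ (tn m + s) - ψ (tn m)) : ℝ) = 0 := by
          rw [inner_sub_right, hψv, hψv, sub_zero]
        have hlow := hclb _ hin
        calc ‖ψ (tn m + s) - ψ (tn m)‖
            = c⁻¹ * (c * ‖ψ (tn m + s) - ψ (tn m)‖) := by field_simp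
          _ ≤ c⁻¹ * Nn K v (ψ (tn m + s) - ψ (tn m)) :=
              mul_le_mul_of_nonneg_left hlow (inv_pos.mpr hc).le
      · have := (hLzero s hs).const_mul c⁻¹
        simpa using this
    have he : (fun m => ψ (tn m + s)) = fun m => (ψ (tn m + s) - ψ (tn m)) + ψ (tn m) :=
      funext fun m => by abel
    rw [he]
    simpa using hdiff.add hpψ
  -- Step 4 : p is a fixed point of the projected flow
  have hfix : ∀ s : ℝ, 0 ≤ s → piProj v (φ s p) = p := by
    intro s hs
    have h1 : ∀ m, piProj v (φ s (ψ (tn m))) = ψ (tn m + s) :=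
      fun m => (hψkey (tn m) s (htn0 m) hs).symm
    have hnormt : Tendsto (fun m => ‖ψ (tn m) - p‖) atTop (𝓝 0) := by
      have h0 : Tendsto (fun m => ψ (tn m) - p) atTop (𝓝 0) := by
        have := hpψ.sub (tendsto_const_nhds (x := p))
        rwa [sub_self] at this
      rwa [tendsto_zero_iff_norm_tendsto_zero] at h0
    have h2 : Tendsto (fun m => piProj v (φ s (ψ (tn m))) - piProj v (φ s p)) atTop (𝓝 0) := by
      rw [tendsto_zero_iff_norm_tendsto_zero]
      apply squeeze_zero (fun m => norm_nonneg _)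
        (g := fun m => c⁻¹ * ((4 / ε) * ‖ψ (tn m) - p‖))
      · intro m
        have hin : (inner ℝ v (piProj v (φ s (ψ (tn m))) - piProj v (φ s p)) : ℝ) = 0 := by
          rw [inner_sub_right, inner_piProj hvnorm, inner_piProj hvnorm, sub_zero]
        have hNle : Nn K v (piProj v (φ s (ψ (tn m))) - piProj v (φ s p))
            ≤ (4 / ε) * ‖ψ (tn m) - p‖ := by
          rw [hNn_pi]
          exact le_trans (hNn_nonexp _ (hψX _ (htn0 m)) p hpX s hs) (hNn_le _)
        have hlow := hclb _ hin
        calc ‖piProj v (φ s (ψ (tn m))) - piProj v (φ s p)‖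
            = c⁻¹ * (c * ‖piProj v (φ s (ψ (tn m))) - piProj v (φ s p)‖) := by field_simp
          _ ≤ c⁻¹ * Nn K v (piProj v (φ s (ψ (tn m))) - piProj v (φ s p)) :=
              mul_le_mul_of_nonneg_left hlow (inv_pos.mpr hc).le
          _ ≤ c⁻¹ * ((4 / ε) * ‖ψ (tn m) - p‖) :=
              mul_le_mul_of_nonneg_left hNle (inv_pos.mpr hc).le
      · have := (hnormt.const_mul (4 / ε)).const_mul c⁻¹
        simpa using this
    have h3 : Tendsto (fun m => piProj v (φ s (ψ (tn m)))) atTop (𝓝 (piProj v (φ s p))) := by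
      have he : (fun m => piProj v (φ s (ψ (tn m))))
          = fun m => (piProj v (φ s (ψ (tn m))) - piProj v (φ s p)) + piProj v (φ s p) :=
        funext fun m => by abel
      rw [he]
      simpa using h2.add (tendsto_const_nhds (x := piProj v (φ s p)))
    have h4 : Tendsto (fun m => piProj v (φ s (ψ (tn m)))) atTop (𝓝 p) := by
      rw [funext h1]
      exact hconv s hs
    exact tendsto_nhds_unique h3 h4
  -- Step 5 : identify the derivative
  have hode := hφode p hpX 0 le_rfl
  rw [hφ0 p hpX] at hode
  have hGeq : ∀ s ∈ Ici (0:ℝ), φ s p = p + (inner ℝ v (φ s p) : ℝ) • v := by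
    intro s hs
    conv_lhs => rw [← piProj_decomp v (φ s p)]
    rw [hfix s hs]
  have hcder : HasDerivWithinAt (fun s => (inner ℝ v (φ s p) : ℝ))
      (inner ℝ v (f p) : ℝ) (Ici 0) 0 := by
    have := ((innerSL ℝ v).hasFDerivAt (x := φ 0 p)).comp_hasDerivWithinAt 0 hode
    exact this
  have hGder2 : HasDerivWithinAt (fun s => φ s p) ((inner ℝ v (f p) : ℝ) • v) (Ici 0) 0 := by
    have hrhs : HasDerivWithinAt (fun s => p + (inner ℝ v (φ s p) : ℝ) • v)
        ((inner ℝ v (f p) : ℝ) • v) (Ici 0) 0 := by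
      simpa using (hcder.smul_const v).const_add p
    exact hrhs.congr (fun y hy => hGeq y hy) (hGeq 0 self_mem_Ici)
  have huniq : f p = (inner ℝ v (f p) : ℝ) • v :=
    UniqueDiffWithinAt.eq_deriv _ (uniqueDiffOn_Ici 0 0 self_mem_Ici) hode hGder2
  exact ⟨(inner ℝ v (f p) : ℝ), huniq⟩
end

section
/- Fix σ ∈ ℝⁿ_{≥0}. (i) For each x₀ ∈ X_σ, let S(t) be the solution of Ṡ = ΓR(S) with S(0) = σ + Γx₀, and define x(t) := x₀ + ∫₀ᵗ R(S(τ)) dτ; then x(t) is the unique solution of ẋ = R(σ + Γx) with x(0) = x₀, it satisfies S(t) = σ + Γx(t) and x(t) ∈ X_σ for all t ≥ 0, and is defined for all t ≥ 0 (the extent system is forward complete on X_σ). (ii) If in addition every solution of Ṡ = ΓR(S) on ℝⁿ_{≥0} is bounded, then for every solution x(t) of ẋ = R(σ + Γx) on X_σ the function t ↦ Γx(t) is bounded on [0, ∞). -/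
open Filter Topology Set MeasureTheory

private lemma aux_contR {n m : ℕ} (R : EuclideanSpace ℝ (Fin n) → EuclideanSpace ℝ (Fin m))
    (hR : ∀ S₀ : EuclideanSpace ℝ (Fin n), (∀ i, 0 ≤ S₀ i) →
      ∃ L : NNReal, ∃ U ∈ nhdsWithin S₀ {S : EuclideanSpace ℝ (Fin n) | ∀ i, 0 ≤ S i},
        LipschitzOnWith L R U)
    {p : EuclideanSpace ℝ (Fin n)} (hp : ∀ i, 0 ≤ p i) :
    ContinuousWithinAt R {S : EuclideanSpace ℝ (Fin n) | ∀ i, 0 ≤ S i} p := by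
  obtain ⟨L, U, hU, hLip⟩ := hR p hp
  have hpU : p ∈ U := mem_of_mem_nhdsWithin (show p ∈ {S : EuclideanSpace ℝ (Fin n) | ∀ i, 0 ≤ S i} from hp) hU
  exact (hLip.continuousOn.continuousWithinAt hpU).mono_of_mem_nhdsWithin hU

private lemma aux_stay {n m : ℕ}
    (Γ : EuclideanSpace ℝ (Fin m) →ₗ[ℝ] EuclideanSpace ℝ (Fin n))
    (σ : EuclideanSpace ℝ (Fin n))
    (R : EuclideanSpace ℝ (Fin n) → EuclideanSpace ℝ (Fin m))
    (w : ℝ → EuclideanSpace ℝ (Fin m))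
    (hw : ∀ t : ℝ, 0 ≤ t → (∀ i, 0 ≤ (σ + Γ (w t)) i) ∧
      HasDerivWithinAt w (R (σ + Γ (w t))) (Set.Ici 0) t)
    {c : ℝ} (hc : 0 ≤ c) {U : Set (EuclideanSpace ℝ (Fin n))}
    (hU : U ∈ nhdsWithin (σ + Γ (w c)) {S : EuclideanSpace ℝ (Fin n) | ∀ i, 0 ≤ S i}) :
    ∃ ε > 0, ∀ t ∈ Ico c (c + ε), σ + Γ (w t) ∈ U := by
  have hΓc : Continuous fun q : EuclideanSpace ℝ (Fin m) => (Γ q : EuclideanSpace ℝ (Fin n)) :=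
    Γ.continuous_of_finiteDimensional
  have hcont : ContinuousWithinAt (fun t => σ + Γ (w t)) (Ici 0) c :=
    (hΓc.continuousAt.comp_continuousWithinAt ((hw c hc).2.continuousWithinAt)).const_add σ
  have htend : Tendsto (fun t => σ + Γ (w t)) (nhdsWithin c (Ici 0))
      (nhdsWithin (σ + Γ (w c)) {S : EuclideanSpace ℝ (Fin n) | ∀ i, 0 ≤ S i}) := by
    rw [tendsto_nhdsWithin_iff]
    refine ⟨hcont, ?_⟩
    filter_upwards [self_mem_nhdsWithin] with t ht
    exact (hw t ht).1
  have hmem : (fun t => σ + Γ (w t)) ⁻¹' U ∈ nhdsWithin c (Ici 0) := htend hU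
  rw [Metric.mem_nhdsWithin_iff] at hmem
  obtain ⟨ε, hε, hsub⟩ := hmem
  refine ⟨ε, hε, fun t ht => hsub ⟨?_, hc.trans ht.1⟩⟩
  rw [Metric.mem_ball, Real.dist_eq, abs_of_nonneg (sub_nonneg.2 ht.1)]
  linarith [ht.2]

private lemma aux_unique {n m : ℕ}
    (Γ : EuclideanSpace ℝ (Fin m) →ₗ[ℝ] EuclideanSpace ℝ (Fin n))
    (R : EuclideanSpace ℝ (Fin n) → EuclideanSpace ℝ (Fin m))
    (hR : ∀ S₀ : EuclideanSpace ℝ (Fin n), (∀ i, 0 ≤ S₀ i) →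
      ∃ L : NNReal, ∃ U ∈ nhdsWithin S₀ {S : EuclideanSpace ℝ (Fin n) | ∀ i, 0 ≤ S i},
        LipschitzOnWith L R U)
    (σ : EuclideanSpace ℝ (Fin n))
    (y z : ℝ → EuclideanSpace ℝ (Fin m))
    (hy : ∀ t : ℝ, 0 ≤ t → (∀ i, 0 ≤ (σ + Γ (y t)) i) ∧
      HasDerivWithinAt y (R (σ + Γ (y t))) (Set.Ici 0) t)
    (hz : ∀ t : ℝ, 0 ≤ t → (∀ i, 0 ≤ (σ + Γ (z t)) i) ∧
      HasDerivWithinAt z (R (σ + Γ (z t))) (Set.Ici 0) t)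
    (h0 : y 0 = z 0) :
    ∀ T : ℝ, 0 ≤ T → y T = z T := by
  intro T hT
  have hyc : ContinuousOn y (Ici 0) := fun t ht => ((hy t ht).2).continuousWithinAt
  have hzc : ContinuousOn z (Ici 0) := fun t ht => ((hz t ht).2).continuousWithinAt
  set A := {t : ℝ | t ∈ Icc 0 T ∧ ∀ τ ∈ Icc 0 t, y τ = z τ} with hA
  have h0A : (0:ℝ) ∈ A := by
    refine ⟨⟨le_rfl, hT⟩, fun τ hτ => ?_⟩
    have hτ0 : τ = 0 := le_antisymm hτ.2 hτ.1
    rw [hτ0]; exact h0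
  have hAbdd : BddAbove A := ⟨T, fun t ht => ht.1.2⟩
  have hAne : A.Nonempty := ⟨0, h0A⟩
  set c := sSup A with hc
  have hc0 : 0 ≤ c := le_csSup hAbdd h0A
  have hcT : c ≤ T := csSup_le hAne fun t ht => ht.1.2
  have heqlt : ∀ τ ∈ Ico 0 c, y τ = z τ := by
    intro τ hτ
    obtain ⟨a, haA, hlt⟩ := exists_lt_of_lt_csSup hAne hτ.2
    exact haA.2 τ ⟨hτ.1, hlt.le⟩
  have hyzc : y c = z c := by
    rcases eq_or_lt_of_le hc0 with h | h
    · rw [← h]; exact h0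
    · have hcc : c ∈ closure (Ico 0 c) := by
        rw [closure_Ico h.ne]
        exact ⟨hc0, le_rfl⟩
      have hnb : (nhdsWithin c (Ico 0 c)).NeBot := mem_closure_iff_nhdsWithin_neBot.mp hcc
      have h1 : Tendsto y (nhdsWithin c (Ico 0 c)) (nhds (y c)) :=
        (hyc c hc0).mono_left (nhdsWithin_mono c fun t ht => ht.1)
      have h2 : Tendsto z (nhdsWithin c (Ico 0 c)) (nhds (z c)) :=
        (hzc c hc0).mono_left (nhdsWithin_mono c fun t ht => ht.1)
      have heqf : z =ᶠ[nhdsWithin c (Ico 0 c)] y :=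
        eventuallyEq_of_mem self_mem_nhdsWithin fun τ hτ => (heqlt τ hτ).symm
      exact tendsto_nhds_unique h1 (h2.congr' heqf)
  have heqc : ∀ τ ∈ Icc 0 c, y τ = z τ := by
    intro τ hτ
    rcases lt_or_eq_of_le hτ.2 with h | h
    · exact heqlt τ ⟨hτ.1, h⟩
    · rw [h]; exact hyzc
  rcases eq_or_lt_of_le hcT with hceq | hclt
  · rw [← hceq]; exact hyzc
  · exfalso
    obtain ⟨L, U, hU, hLip⟩ := hR (σ + Γ (y c)) ((hy c hc0).1)
    obtain ⟨ε₁, hε₁, hyU⟩ := aux_stay Γ σ R y hy hc0 hU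
    have hU' : U ∈ nhdsWithin (σ + Γ (z c)) {S : EuclideanSpace ℝ (Fin n) | ∀ i, 0 ≤ S i} := by
      rw [← hyzc]; exact hU
    obtain ⟨ε₂, hε₂, hzU⟩ := aux_stay Γ σ R z hz hc0 hU'
    set b := min (c + min ε₁ ε₂) T with hb
    have hcb : c < b := lt_min (by have := lt_min hε₁ hε₂; linarith) hclt
    have hb0 : 0 ≤ b := hc0.trans hcb.le
    set Γ' := LinearMap.toContinuousLinearMap Γ with hΓ'
    have hlipA : LipschitzWith ‖Γ'‖₊ (fun q : EuclideanSpace ℝ (Fin m) => σ + Γ q) := by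
      apply LipschitzWith.of_dist_le_mul
      intro p q
      have h1 : dist (σ + Γ p) (σ + Γ q) = dist (Γ' p) (Γ' q) := dist_add_left σ _ _
      rw [h1]
      exact Γ'.lipschitz.dist_le_mul p q
    have hvK : ∀ t : ℝ, LipschitzOnWith (L * ‖Γ'‖₊)
        (fun q : EuclideanSpace ℝ (Fin m) => R (σ + Γ q))
        {q : EuclideanSpace ℝ (Fin m) | σ + Γ q ∈ U} :=
      fun _ => hLip.comp (hlipA.lipschitzOnWith (s := {q : EuclideanSpace ℝ (Fin m) | σ + Γ q ∈ U})) (fun q hq => hq)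
    have hIcc : Icc c b ⊆ Ici (0:ℝ) := fun t ht => hc0.trans ht.1
    have hbound₁ : ∀ t ∈ Ico c b, t ∈ Ico c (c + ε₁) := by
      intro t ht
      refine ⟨ht.1, lt_of_lt_of_le ht.2 ?_⟩
      calc b ≤ c + min ε₁ ε₂ := min_le_left _ _
        _ ≤ c + ε₁ := by have := min_le_left ε₁ ε₂; linarith
    have hbound₂ : ∀ t ∈ Ico c b, t ∈ Ico c (c + ε₂) := by
      intro t ht
      refine ⟨ht.1, lt_of_lt_of_le ht.2 ?_⟩
      calc b ≤ c + min ε₁ ε₂ := min_le_left _ _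
        _ ≤ c + ε₂ := by have := min_le_right ε₁ ε₂; linarith
    have hEq : EqOn y z (Icc c b) := by
      apply ODE_solution_unique_of_mem_Icc_right (fun t _ => hvK t)
        (hyc.mono hIcc)
        (fun t ht => ((hy t (hc0.trans ht.1)).2).mono (Ici_subset_Ici.mpr (hc0.trans ht.1)))
        (fun t ht => hyU t (hbound₁ t ht))
        (hzc.mono hIcc)
        (fun t ht => ((hz t (hc0.trans ht.1)).2).mono (Ici_subset_Ici.mpr (hc0.trans ht.1)))
        (fun t ht => hzU t (hbound₂ t ht))
        hyzc
    have hbA : b ∈ A := by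
      refine ⟨⟨hb0, min_le_right _ _⟩, fun τ hτ => ?_⟩
      rcases le_or_gt τ c with h | h
      · exact heqc τ ⟨hτ.1, h⟩
      · exact hEq ⟨h.le, hτ.2⟩
    exact absurd (le_csSup hAbdd hbA) (not_le.mpr hcb)

/-- fix `σ ≥ 0`. (i) For `x₀ ∈ X_σ` and `S` the solution of `Ṡ = Γ R(S)`
with `S(0) = σ + Γ x₀`, the function `x(t) = x₀ + ∫₀ᵗ R(S(τ)) dτ` is the unique solution
of the extent system `ẋ = R(σ + Γ x)` with `x(0) = x₀`; it satisfies `S(t) = σ + Γ x(t)`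
and `x(t) ∈ X_σ` for all `t ≥ 0` (forward completeness of the extent system on `X_σ`).
(ii) If every solution of `Ṡ = Γ R(S)` on the nonnegative orthant is bounded, then for
every solution `x(t)` of the extent system on `X_σ`, `t ↦ Γ x(t)` is bounded on
`[0, ∞)`. -/
theorem stmt15 {n m : ℕ}
    (Γ : EuclideanSpace ℝ (Fin m) →ₗ[ℝ] EuclideanSpace ℝ (Fin n))
    (R : EuclideanSpace ℝ (Fin n) → EuclideanSpace ℝ (Fin m))
    -- R is locally Lipschitz on the nonnegative orthant
    (hR : ∀ S₀ : EuclideanSpace ℝ (Fin n), (∀ i, 0 ≤ S₀ i) →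
      ∃ L : NNReal, ∃ U ∈ nhdsWithin S₀ {S : EuclideanSpace ℝ (Fin n) | ∀ i, 0 ≤ S i},
        LipschitzOnWith L R U)
    (σ : EuclideanSpace ℝ (Fin n)) (hσ : ∀ i, 0 ≤ σ i) :
    -- part (i)
    (∀ x₀ : EuclideanSpace ℝ (Fin m), (∀ i, 0 ≤ (σ + Γ x₀) i) →
      ∀ S : ℝ → EuclideanSpace ℝ (Fin n), S 0 = σ + Γ x₀ →
        (∀ t : ℝ, 0 ≤ t → (∀ i, 0 ≤ S t i) ∧
          HasDerivWithinAt S (Γ (R (S t))) (Set.Ici 0) t) →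
        -- x(t) := x₀ + ∫₀ᵗ R(S(τ)) dτ is a solution of the extent system,
        -- with S(t) = σ + Γ x(t) and x(t) ∈ X_σ for all t ≥ 0
        (∀ t : ℝ, 0 ≤ t →
          (∀ i, 0 ≤ (σ + Γ (x₀ + ∫ τ in (0 : ℝ)..t, R (S τ))) i) ∧
          S t = σ + Γ (x₀ + ∫ τ in (0 : ℝ)..t, R (S τ)) ∧
          HasDerivWithinAt (fun u : ℝ => x₀ + ∫ τ in (0 : ℝ)..u, R (S τ))
            (R (σ + Γ (x₀ + ∫ τ in (0 : ℝ)..t, R (S τ)))) (Set.Ici 0) t) ∧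
        -- and it is the unique such solution
        (∀ y : ℝ → EuclideanSpace ℝ (Fin m), y 0 = x₀ →
          (∀ t : ℝ, 0 ≤ t → (∀ i, 0 ≤ (σ + Γ (y t)) i) ∧
            HasDerivWithinAt y (R (σ + Γ (y t))) (Set.Ici 0) t) →
          ∀ t : ℝ, 0 ≤ t → y t = x₀ + ∫ τ in (0 : ℝ)..t, R (S τ))) ∧
    -- part (ii)
    ((∀ S : ℝ → EuclideanSpace ℝ (Fin n), (∀ i, 0 ≤ S 0 i) →
        (∀ t : ℝ, 0 ≤ t → (∀ i, 0 ≤ S t i) ∧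
          HasDerivWithinAt S (Γ (R (S t))) (Set.Ici 0) t) →
        ∃ M : ℝ, ∀ t : ℝ, 0 ≤ t → ‖S t‖ ≤ M) →
      ∀ x : ℝ → EuclideanSpace ℝ (Fin m),
        (∀ t : ℝ, 0 ≤ t → (∀ i, 0 ≤ (σ + Γ (x t)) i) ∧
          HasDerivWithinAt x (R (σ + Γ (x t))) (Set.Ici 0) t) →
        ∃ M : ℝ, ∀ t : ℝ, 0 ≤ t → ‖Γ (x t)‖ ≤ M) := by
  constructor
  · -- part (i)
    intro x₀ hx₀ S hS0 hS
    have hScont : ContinuousOn S (Ici 0) := fun t ht => ((hS t ht).2).continuousWithinAt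
    have hgc : ContinuousOn (fun τ => R (S τ)) (Ici 0) := fun t ht =>
      (aux_contR R hR (hS t ht).1).comp (hScont t ht) (fun τ hτ => (hS τ hτ).1)
    have hgint : ∀ t : ℝ, 0 ≤ t → IntervalIntegrable (fun τ => R (S τ)) volume 0 t := by
      intro t ht
      apply ContinuousOn.intervalIntegrable
      rw [uIcc_of_le ht]
      exact hgc.mono (fun τ hτ => hτ.1)
    set Γ' := LinearMap.toContinuousLinearMap Γ with hΓ'
    have key : ∀ t : ℝ, 0 ≤ t → S t = σ + Γ (x₀ + ∫ τ in (0:ℝ)..t, R (S τ)) := by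
      intro t ht
      have hFTC : ∫ τ in (0:ℝ)..t, Γ' (R (S τ)) = S t - S 0 := by
        apply intervalIntegral.integral_eq_sub_of_hasDeriv_right_of_le ht
          (hScont.mono (fun τ hτ => hτ.1))
          (fun τ hτ => ((hS τ hτ.1.le).2).mono (fun u hu => hτ.1.le.trans (le_of_lt hu)))
        apply ContinuousOn.intervalIntegrable
        rw [uIcc_of_le ht]
        exact (Γ'.continuous.comp_continuousOn hgc).mono (fun τ hτ => hτ.1)
      have hswap : ∫ τ in (0:ℝ)..t, Γ' (R (S τ)) = Γ' (∫ τ in (0:ℝ)..t, R (S τ)) :=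
        Γ'.intervalIntegral_comp_comm (hgint t ht)
      have hkey : S t - S 0 = Γ' (∫ τ in (0:ℝ)..t, R (S τ)) := by rw [← hswap, hFTC]
      rw [sub_eq_iff_eq_add'] at hkey
      rw [hkey, hS0]
      show σ + Γ x₀ + Γ (∫ τ in (0:ℝ)..t, R (S τ)) = σ + Γ (x₀ + ∫ τ in (0:ℝ)..t, R (S τ))
      rw [map_add, add_assoc]
    have hderiv : ∀ t : ℝ, 0 ≤ t →
        HasDerivWithinAt (fun u : ℝ => x₀ + ∫ τ in (0:ℝ)..u, R (S τ)) (R (S t)) (Ici 0) t := by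
      intro t ht
      have hmain : HasDerivWithinAt (fun u : ℝ => ∫ τ in (0:ℝ)..u, R (S τ)) (R (S t))
          (Ici 0) t := by
        rcases eq_or_lt_of_le ht with h | h
        · rw [← h]
          have hmeas : StronglyMeasurableAtFilter (fun τ => R (S τ))
              (nhdsWithin (0:ℝ) (Set.Ioi 0)) volume := by
            refine ⟨Icc 0 1, ?_, (hgc.mono (fun τ hτ => hτ.1)).aestronglyMeasurable
              measurableSet_Icc⟩
            rw [Metric.mem_nhdsWithin_iff]
            refine ⟨1, one_pos, fun τ hτ => ⟨le_of_lt hτ.2, ?_⟩⟩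
            have := hτ.1
            rw [Metric.mem_ball, Real.dist_eq, sub_zero] at this
            exact le_of_lt (lt_of_le_of_lt (le_abs_self τ) this)
          exact intervalIntegral.integral_hasDerivWithinAt_right (hgint 0 le_rfl) hmeas
            ((hgc 0 Set.self_mem_Ici).mono Ioi_subset_Ici_self)
        · have hmeas : StronglyMeasurableAtFilter (fun τ => R (S τ)) (nhds t) volume :=
            ⟨Ioi 0, Ioi_mem_nhds h,
              (hgc.mono Ioi_subset_Ici_self).aestronglyMeasurable measurableSet_Ioi⟩
          exact (intervalIntegral.integral_hasDerivAt_right (hgint t ht) hmeas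
            ((hgc t ht).continuousAt (Ici_mem_nhds h))).hasDerivWithinAt
      exact hmain.const_add x₀
    have hxsol : ∀ t : ℝ, 0 ≤ t →
        (∀ i, 0 ≤ (σ + Γ (x₀ + ∫ τ in (0:ℝ)..t, R (S τ))) i) ∧
        HasDerivWithinAt (fun u : ℝ => x₀ + ∫ τ in (0:ℝ)..u, R (S τ))
          (R (σ + Γ (x₀ + ∫ τ in (0:ℝ)..t, R (S τ)))) (Ici 0) t := by
      intro t ht
      constructor
      · have h := (hS t ht).1
        rwa [key t ht] at h
      · have h := hderiv t ht
        rwa [key t ht] at h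
    constructor
    · intro t ht
      exact ⟨(hxsol t ht).1, key t ht, (hxsol t ht).2⟩
    · intro y hy0 hy t ht
      have h0 : y 0 = x₀ + ∫ τ in (0:ℝ)..(0:ℝ), R (S τ) := by
        rw [intervalIntegral.integral_same, add_zero]
        exact hy0
      exact aux_unique Γ R hR σ y (fun u : ℝ => x₀ + ∫ τ in (0:ℝ)..u, R (S τ))
        hy hxsol h0 t ht
  · -- part (ii)
    intro hbdd x hx
    set Γ' := LinearMap.toContinuousLinearMap Γ with hΓ'
    have hS' : ∀ t : ℝ, 0 ≤ t → (∀ i, 0 ≤ ((fun u => σ + Γ (x u)) t) i) ∧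
        HasDerivWithinAt (fun u => σ + Γ (x u)) (Γ (R ((fun u => σ + Γ (x u)) t)))
          (Ici 0) t := by
      intro t ht
      refine ⟨(hx t ht).1, ?_⟩
      have h1 : HasDerivWithinAt (fun u => Γ' (x u)) (Γ' (R (σ + Γ (x t)))) (Ici 0) t :=
        Γ'.hasFDerivAt.comp_hasDerivWithinAt t (hx t ht).2
      exact h1.const_add σ
    obtain ⟨M, hM⟩ := hbdd (fun u => σ + Γ (x u)) (hx 0 le_rfl).1 hS'
    refine ⟨M + ‖σ‖, fun t ht => ?_⟩
    have heq : Γ (x t) = (σ + Γ (x t)) - σ := by abel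
    rw [heq]
    calc ‖(σ + Γ (x t)) - σ‖ ≤ ‖σ + Γ (x t)‖ + ‖σ‖ := norm_sub_le _ _
      _ ≤ M + ‖σ‖ := by linarith [hM t ht]
end
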